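/- arXiv:0905.3098 — 5 statements merged into one kernel-verified Lean document; each statement's English description precedes it below -/
import Mathlib

section
/- Let (X,T) be a minimal distal system and d ≥ 1. Then the regionally proximal relation RP^[d](X) is an equivalence relation (in particular it is transitive). -/
open Filter Topology
set_option linter.unusedSectionVars false
set_option linter.unusedVariables false

noncomputable section

def dotP {d : ℕ} (n : Fin d → ℤ) (ε : Fin d → Bool) : ℤ :=
  ∑ i, if ε i then n i else 0

def vertex0 (d : ℕ) : Fin d → Bool := fun _ => false

def cubeQ (X : Type*) [TopologicalSpace X] (T : X ≃ₜ X) (d : ℕ) :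
    Set ((Fin d → Bool) → X) :=
  closure {y | ∃ (x : X) (n : Fin d → ℤ), y = fun ε => (T.toEquiv ^ dotP n ε) x}

/-- The regionally proximal relation of order `d`. -/
def RP (X : Type*) [MetricSpace X] (T : X ≃ₜ X) (d : ℕ) : Set (X × X) :=
  {p | ∀ δ > 0, ∃ (x' y' : X) (n : Fin d → ℤ),
    dist p.1 x' < δ ∧ dist p.2 y' < δ ∧
    ∀ ε : Fin d → Bool, ε ≠ vertex0 d →
      dist ((T.toEquiv ^ dotP n ε) x') ((T.toEquiv ^ dotP n ε) y') < δ}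

/-- The point of `X^{2^{d+1}}` with value `a` at the vertex `∅` and given by `b`
elsewhere. -/
def set0 {X : Type*} {d : ℕ} (a : X) (b : (Fin d → Bool) → X) : (Fin d → Bool) → X :=
  fun ε => if ε = vertex0 d then a else b ε

namespace RPwork


variable {X : Type*} [MetricSpace X] [CompactSpace X]

lemma contPow (T : X ≃ₜ X) (k : ℤ) : Continuous fun x => (T.toEquiv ^ k) x := by
  have hnat : ∀ (e : X ≃ X), Continuous (⇑e) → ∀ n : ℕ,
      Continuous fun x => (e ^ n) x := by
    intro e he n
    induction n with
    | zero => simpa [pow_zero] using continuous_id'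
    | succ m ih =>
        have h : (fun x => (e ^ (m + 1)) x) = fun x => (e ^ m) (e x) := by
          funext x; rw [pow_succ, Equiv.Perm.mul_apply]
        rw [h]; exact ih.comp he
  cases k with
  | ofNat n => simpa [zpow_natCast] using hnat T.toEquiv T.continuous n
  | negSucc n =>
      have h : (T.toEquiv ^ Int.negSucc n) = (T.symm.toEquiv) ^ (n + 1) := by
        rw [zpow_negSucc, ← inv_pow]
        rfl
      rw [h]
      exact hnat T.symm.toEquiv T.symm.continuous (n + 1)

lemma zpow_apply_add (T : X ≃ₜ X) (a b : ℤ) (x : X) :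
    (T.toEquiv ^ (a + b)) x = (T.toEquiv ^ a) ((T.toEquiv ^ b) x) := by
  rw [zpow_add, Equiv.Perm.mul_apply]

variable (T : X ≃ₜ X)

section cube

variable (X) in
/-- cube space over direction set ι -/
abbrev Cb (ι : Type) := (ι → Bool) → X

variable {ι : Type} [Fintype ι] [DecidableEq ι]

def dotE (n : ι → ℤ) (ε : ι → Bool) : ℤ := ∑ i, if ε i then n i else 0

/-- the face transformation -/
def Sc (n : ι → ℤ) : Cb X ι → Cb X ι := fun c ε => (T.toEquiv ^ dotE n ε) (c ε)

lemma Sc_continuous (n : ι → ℤ) : Continuous (Sc T n) :=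
  continuous_pi fun ε => (contPow T _).comp (continuous_apply ε)

lemma dotE_add (n m : ι → ℤ) (ε : ι → Bool) :
    dotE (n + m) ε = dotE n ε + dotE m ε := by
  unfold dotE
  rw [← Finset.sum_add_distrib]
  congr 1; funext i
  by_cases h : ε i <;> simp [h]

lemma dotE_zero (ε : ι → Bool) : dotE (0 : ι → ℤ) ε = 0 := by
  unfold dotE; simp

lemma Sc_comp (n m : ι → ℤ) : Sc T n ∘ Sc T m = Sc T (n + m) := by
  funext c ε
  simp only [Function.comp, Sc, dotE_add]
  rw [zpow_apply_add]

lemma Sc_zero : Sc T (0 : ι → ℤ) = id := by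
  funext c ε
  simp [Sc, dotE_zero]

variable (ι) in
/-- the (face) Ellis semigroup -/
def Ee : Set (Cb X ι → Cb X ι) := closure (Set.range (Sc T (ι := ι)))

variable (ι) in
/-- the dynamical cube set -/
def Qq : Set (Cb X ι) := closure {c | ∃ v n, c = Sc T n (fun _ => v)}

lemma isClosed_Ee : IsClosed (Ee T ι) := isClosed_closure
lemma isClosed_Qq : IsClosed (Qq T ι) := isClosed_closure

lemma Sc_mem_Ee (n : ι → ℤ) : Sc T n ∈ Ee T ι := subset_closure ⟨n, rfl⟩

lemma id_mem_Ee : (id : Cb X ι → Cb X ι) ∈ Ee T ι := by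
  rw [← Sc_zero T (ι := ι)]; exact Sc_mem_Ee T 0

lemma diag_mem_Qq (v : X) : (fun _ => v : Cb X ι) ∈ Qq T ι := by
  refine subset_closure ⟨v, 0, ?_⟩
  rw [Sc_zero]; rfl


lemma compact_Ee : IsCompact (Ee T ι) := (isClosed_Ee T).isCompact

/-- approximate an Ellis element at two points simultaneously -/
lemma E_approx2 {q : Cb X ι → Cb X ι} (hq : q ∈ Ee T ι) (c₁ c₂ : Cb X ι)
    {δ : ℝ} (hδ : 0 < δ) :
    ∃ n : ι → ℤ, dist (Sc T n c₁) (q c₁) < δ ∧ dist (Sc T n c₂) (q c₂) < δ := by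
  have hcont : Continuous fun f : Cb X ι → Cb X ι => (f c₁, f c₂) :=
    (continuous_apply c₁).prodMk (continuous_apply c₂)
  have hmem : (q c₁, q c₂) ∈ closure ((fun f : Cb X ι → Cb X ι => (f c₁, f c₂)) ''
      Set.range (Sc T (ι := ι))) := by
    apply image_closure_subset_closure_image hcont
    exact ⟨q, hq, rfl⟩
  rcases Metric.mem_closure_iff.1 hmem δ hδ with ⟨b, ⟨f, ⟨n, rfl⟩, rfl⟩, hb⟩
  rw [Prod.dist_eq, max_lt_iff] at hb
  exact ⟨n, by rw [dist_comm]; exact hb.1, by rw [dist_comm]; exact hb.2⟩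

lemma E_approx1 {q : Cb X ι → Cb X ι} (hq : q ∈ Ee T ι) (c : Cb X ι)
    {δ : ℝ} (hδ : 0 < δ) :
    ∃ n : ι → ℤ, dist (Sc T n c) (q c) < δ := by
  rcases E_approx2 T hq c c hδ with ⟨n, h, -⟩
  exact ⟨n, h⟩

/-- Ellis elements act coordinatewise -/
lemma coordwise {q : Cb X ι → Cb X ι} (hq : q ∈ Ee T ι) {c₁ c₂ : Cb X ι}
    {v : ι → Bool} (h : c₁ v = c₂ v) : q c₁ v = q c₂ v := by
  have hcl : IsClosed {f : Cb X ι → Cb X ι | f c₁ v = f c₂ v} := by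
    apply isClosed_eq
    · exact (continuous_apply v).comp (continuous_apply c₁)
    · exact (continuous_apply v).comp (continuous_apply c₂)
  have hsub : Set.range (Sc T (ι := ι)) ⊆ {f | f c₁ v = f c₂ v} := by
    rintro f ⟨n, rfl⟩
    simp only [Set.mem_setOf_eq, Sc, h]
  exact closure_minimal hsub hcl hq

/-- the coordinate map of an Ellis element -/
def cval (q : Cb X ι → Cb X ι) (v : ι → Bool) (z : X) : X := q (fun _ => z) v

lemma cval_apply {q : Cb X ι → Cb X ι} (hq : q ∈ Ee T ι) (c : Cb X ι) (v : ι → Bool) :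
    q c v = cval q v (c v) :=
  coordwise T hq rfl

lemma cval_comp {q q' : Cb X ι → Cb X ι} (hq : q ∈ Ee T ι) (hq' : q' ∈ Ee T ι)
    (v : ι → Bool) (z : X) : cval (q ∘ q') v z = cval q v (cval q' v z) := by
  show q (q' (fun _ => z)) v = _
  rw [cval_apply T hq (q' fun _ => z) v]
  rfl

lemma cval_id (v : ι → Bool) (z : X) : cval (id : Cb X ι → Cb X ι) v z = z := rfl

/-- the Ellis semigroup is closed under composition -/
lemma E_comp {q q' : Cb X ι → Cb X ι} (hq : q ∈ Ee T ι) (hq' : q' ∈ Ee T ι) :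
    q ∘ q' ∈ Ee T ι := by
  have stage1 : ∀ n : ι → ℤ, ∀ r ∈ Ee T ι, Sc T n ∘ r ∈ Ee T ι := by
    intro n r hr
    have hcl : IsClosed {f : Cb X ι → Cb X ι | Sc T n ∘ f ∈ Ee T ι} := by
      have hcont : Continuous fun f : Cb X ι → Cb X ι => Sc T n ∘ f := by
        apply continuous_pi
        intro c
        exact (Sc_continuous T n).comp (continuous_apply c)
      exact (isClosed_Ee T).preimage hcont
    have hsub : Set.range (Sc T (ι := ι)) ⊆ {f | Sc T n ∘ f ∈ Ee T ι} := by
      rintro f ⟨m, rfl⟩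
      rw [Set.mem_setOf_eq, Sc_comp]
      exact Sc_mem_Ee T _
    exact closure_minimal hsub hcl hr
  have hcl : IsClosed {f : Cb X ι → Cb X ι | f ∘ q' ∈ Ee T ι} := by
    have hcont : Continuous fun f : Cb X ι → Cb X ι => f ∘ q' := by
      apply continuous_pi
      intro c
      exact continuous_apply (q' c)
    exact (isClosed_Ee T).preimage hcont
  have hsub : Set.range (Sc T (ι := ι)) ⊆ {f | f ∘ q' ∈ Ee T ι} := by
    rintro f ⟨n, rfl⟩
    exact stage1 n q' hq'
  exact closure_minimal hsub hcl hq

/-- ∅-coordinate is fixed by Ellis elements -/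
lemma E_vtx0 {q : Cb X ι → Cb X ι} (hq : q ∈ Ee T ι) (c : Cb X ι) :
    q c (fun _ => false) = c (fun _ => false) := by
  have hcl : IsClosed {f : Cb X ι → Cb X ι | f c (fun _ => false) = c (fun _ => false)} := by
    apply isClosed_eq
    · exact (continuous_apply _).comp (continuous_apply c)
    · exact continuous_const
  have hsub : Set.range (Sc T (ι := ι)) ⊆
      {f | f c (fun _ => false) = c (fun _ => false)} := by
    rintro f ⟨n, rfl⟩
    have : dotE n (fun _ => false : ι → Bool) = 0 := by unfold dotE; simp
    simp only [Set.mem_setOf_eq, Sc, this, zpow_zero]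
    rfl
  exact closure_minimal hsub hcl hq

section distal

variable (hdistal : ∀ x y : X, x ≠ y →
      ∃ δ > 0, ∀ n : ℤ, δ ≤ dist ((T.toEquiv ^ n) x) ((T.toEquiv ^ n) y))

include hdistal

lemma cube_distal {c c' : Cb X ι} (h : c ≠ c') :
    ∃ δ > 0, ∀ n : ι → ℤ, δ ≤ dist (Sc T n c) (Sc T n c') := by
  have hv : ∃ v, c v ≠ c' v := by
    by_contra hall
    push_neg at hall
    exact h (funext hall)
  rcases hv with ⟨v, hv⟩
  rcases hdistal _ _ hv with ⟨δ, hδ, hd⟩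
  refine ⟨δ, hδ, fun n => le_trans (hd (dotE n v)) ?_⟩
  exact dist_le_pi_dist (Sc T n c) (Sc T n c') v

lemma idem_id {u : Cb X ι → Cb X ι} (hu : u ∈ Ee T ι) (h : u ∘ u = u) :
    u = id := by
  funext c
  by_contra hne
  have hne' : u c ≠ c := fun hh => hne hh
  rcases cube_distal T hdistal (c := c) (c' := u c) (fun hh => hne hh.symm) with ⟨δ, hδ, hd⟩
  rcases E_approx2 T hu c (u c) (by positivity : (0:ℝ) < δ/3) with ⟨n, h1, h2⟩
  have huu : u (u c) = u c := congrFun h c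
  rw [huu] at h2
  have : dist (Sc T n c) (Sc T n (u c)) < δ := by
    calc dist (Sc T n c) (Sc T n (u c)) ≤
        dist (Sc T n c) (u c) + dist (u c) (Sc T n (u c)) := dist_triangle _ _ _
      _ < δ/3 + δ/3 := by rw [dist_comm (u c)]; exact add_lt_add h1 h2
      _ ≤ δ := by linarith
  exact absurd (hd n) (not_le.2 this)

/-- distality: every Ellis element has a two-sided inverse in the Ellis semigroup -/
lemma E_inv {p : Cb X ι → Cb X ι} (hp : p ∈ Ee T ι) :
    ∃ q ∈ Ee T ι, q ∘ p = id ∧ p ∘ q = id := by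
  have hleft : ∀ r ∈ Ee T ι, ∃ q ∈ Ee T ι, q ∘ r = id := by
    intro r hr
    letI : Mul (Cb X ι → Cb X ι) := ⟨fun f g => f ∘ g⟩
    letI : Semigroup (Cb X ι → Cb X ι) :=
      { mul_assoc := fun a b c => rfl }
    have hmul_left : ∀ s : Cb X ι → Cb X ι, Continuous (· * s) := by
      intro s
      apply continuous_pi
      intro c
      exact continuous_apply (s c)
    have hcomp : IsCompact ((fun f : Cb X ι → Cb X ι => f ∘ r) '' Ee T ι) := by
      apply IsCompact.image (compact_Ee T)
      apply continuous_pi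
      intro c
      exact continuous_apply (r c)
    have hne : ((fun f : Cb X ι → Cb X ι => f ∘ r) '' Ee T ι).Nonempty :=
      ⟨r, id, id_mem_Ee T, rfl⟩
    have hsg : ∀ a ∈ (fun f : Cb X ι → Cb X ι => f ∘ r) '' Ee T ι,
        ∀ b ∈ (fun f : Cb X ι → Cb X ι => f ∘ r) '' Ee T ι,
        a * b ∈ (fun f : Cb X ι → Cb X ι => f ∘ r) '' Ee T ι := by
      rintro _ ⟨f, hf, rfl⟩ _ ⟨g, hg, rfl⟩
      exact ⟨f ∘ (r ∘ g), E_comp T hf (E_comp T hr hg), rfl⟩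
    rcases exists_idempotent_in_compact_subsemigroup hmul_left _ hne hcomp hsg
      with ⟨m, ⟨f, hf, rfl⟩, hidem⟩
    have hmE : f ∘ r ∈ Ee T ι := E_comp T hf hr
    have : f ∘ r = id := idem_id T hdistal hmE hidem
    exact ⟨f, hf, this⟩
  rcases hleft p hp with ⟨q, hq, hqp⟩
  rcases hleft q hq with ⟨s, hs, hsq⟩
  have hpq : p ∘ q = id := by
    have h2 : q ∘ (p ∘ q) = q := by
      rw [← Function.comp_assoc, hqp, Function.id_comp]
    calc p ∘ q = (s ∘ q) ∘ (p ∘ q) := by rw [hsq, Function.id_comp]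
      _ = s ∘ (q ∘ (p ∘ q)) := Function.comp_assoc _ _ _
      _ = s ∘ q := by rw [h2]
      _ = id := hsq
  exact ⟨q, hq, hqp, hpq⟩

end distal


lemma Qq_S_inv {c : Cb X ι} (hc : c ∈ Qq T ι) (n : ι → ℤ) : Sc T n c ∈ Qq T ι := by
  have h1 : Sc T n c ∈ Sc T n '' closure {c : Cb X ι | ∃ v m, c = Sc T m (fun _ => v)} :=
    ⟨c, hc, rfl⟩
  have h2 := image_closure_subset_closure_image (f := Sc T n) (Sc_continuous T n)
    (s := {c : Cb X ι | ∃ v m, c = Sc T m (fun _ => v)}) h1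
  refine closure_minimal ?_ (isClosed_Qq T) h2
  rintro _ ⟨_, ⟨v, m, rfl⟩, rfl⟩
  refine subset_closure ⟨v, n + m, ?_⟩
  rw [← Sc_comp]; rfl

lemma Qq_E_inv {q : Cb X ι → Cb X ι} (hq : q ∈ Ee T ι) {c : Cb X ι} (hc : c ∈ Qq T ι) :
    q c ∈ Qq T ι := by
  have h1 : q c ∈ (fun f : Cb X ι → Cb X ι => f c) '' closure (Set.range (Sc T (ι := ι))) :=
    ⟨q, hq, rfl⟩
  have h2 := image_closure_subset_closure_image (f := fun f : Cb X ι → Cb X ι => f c)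
    (continuous_apply c) h1
  refine closure_minimal ?_ (isClosed_Qq T) h2
  rintro _ ⟨_, ⟨n, rfl⟩, rfl⟩
  exact Qq_S_inv T hc n

end cube

section pullback

variable {ι₁ ι₂ : Type} [Fintype ι₁] [DecidableEq ι₁] [Fintype ι₂] [DecidableEq ι₂]

/-- pull back an Ellis element along a vertex map -/
def PB (φ : (ι₁ → Bool) → (ι₂ → Bool)) (q : Cb X ι₂ → Cb X ι₂) : Cb X ι₁ → Cb X ι₁ :=
  fun c η => q (fun _ => c η) (φ η)

lemma PB_apply (φ : (ι₁ → Bool) → (ι₂ → Bool)) (q : Cb X ι₂ → Cb X ι₂)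
    (c : Cb X ι₁) (η : ι₁ → Bool) : PB φ q c η = cval q (φ η) (c η) := rfl

lemma PB_mem (φ : (ι₁ → Bool) → (ι₂ → Bool)) (ψ : (ι₂ → ℤ) → (ι₁ → ℤ))
    (hexp : ∀ (n : ι₂ → ℤ) (ε : ι₁ → Bool), dotE n (φ ε) = dotE (ψ n) ε)
    {q : Cb X ι₂ → Cb X ι₂} (hq : q ∈ Ee T ι₂) : PB φ q ∈ Ee T ι₁ := by
  have hcont : Continuous fun q : Cb X ι₂ → Cb X ι₂ => PB (X := X) φ q := by
    apply continuous_pi; intro c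
    apply continuous_pi; intro η
    exact (continuous_apply (φ η)).comp (continuous_apply (fun _ => c η))
  have h1 : PB φ q ∈ (fun q : Cb X ι₂ → Cb X ι₂ => PB (X := X) φ q) ''
      closure (Set.range (Sc T (ι := ι₂))) := ⟨q, hq, rfl⟩
  have h2 := image_closure_subset_closure_image hcont h1
  refine closure_minimal ?_ (isClosed_Ee T) h2
  rintro _ ⟨_, ⟨n, rfl⟩, rfl⟩
  refine subset_closure ⟨ψ n, ?_⟩
  funext c η
  show Sc T (ψ n) c η = Sc T n (fun _ => c η) (φ η)
  simp only [Sc, hexp]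

end pullback

section transport

variable {ι₁ ι₂ : Type} [Fintype ι₁] [DecidableEq ι₁] [Fintype ι₂] [DecidableEq ι₂]

lemma Qq_transport {F : Cb X ι₂ → Cb X ι₁} (hF : Continuous F)
    (hgen : ∀ (v : X) (n : ι₂ → ℤ), ∃ (w : X) (m : ι₁ → ℤ),
      F (Sc T n (fun _ => v)) = Sc T m (fun _ => w)) :
    ∀ c ∈ Qq T ι₂, F c ∈ Qq T ι₁ := by
  intro c hc
  have h2 := image_closure_subset_closure_image hF (⟨c, hc, rfl⟩ :
    F c ∈ F '' closure {c : Cb X ι₂ | ∃ v n, c = Sc T n (fun _ => v)})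
  refine closure_minimal ?_ (isClosed_Qq T) h2
  rintro _ ⟨_, ⟨v, n, rfl⟩, rfl⟩
  rcases hgen v n with ⟨w, m, hm⟩
  exact subset_closure ⟨w, m, hm.symm ▸ rfl⟩

lemma Ee_transport {G : (Cb X ι₂ → Cb X ι₂) → (Cb X ι₁ → Cb X ι₁)} (hG : Continuous G)
    (hgen : ∀ n : ι₂ → ℤ, ∃ m : ι₁ → ℤ, G (Sc T n) = Sc T m) :
    ∀ q ∈ Ee T ι₂, G q ∈ Ee T ι₁ := by
  intro q hq
  have h2 := image_closure_subset_closure_image hG (⟨q, hq, rfl⟩ :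
    G q ∈ G '' closure (Set.range (Sc T (ι := ι₂))))
  refine closure_minimal ?_ (isClosed_Ee T) h2
  rintro _ ⟨_, ⟨n, rfl⟩, rfl⟩
  rcases hgen n with ⟨m, hm⟩
  exact subset_closure ⟨m, hm.symm⟩

end transport

section optioncube

variable {ι : Type} [Fintype ι] [DecidableEq ι]

def lift0 (ε : ι → Bool) : Option ι → Bool := fun o => o.elim false ε
def lift1 (ε : ι → Bool) : Option ι → Bool := fun o => o.elim true ε

lemma lift0_none (ε : ι → Bool) : lift0 ε none = false := rfl
lemma lift1_none (ε : ι → Bool) : lift1 ε none = true := rfl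

lemma eq_lift0 {η : Option ι → Bool} (h : η none = false) :
    η = lift0 (fun i => η (some i)) := by
  funext o; cases o with
  | none => exact h
  | some i => rfl

lemma eq_lift1 {η : Option ι → Bool} (h : η none = true) :
    η = lift1 (fun i => η (some i)) := by
  funext o; cases o with
  | none => exact h
  | some i => rfl

lemma lift0_vtx0 : lift0 (fun _ => false : ι → Bool) = fun _ => false := by
  funext o; cases o <;> rfl

lemma dotE_opt (n : Option ι → ℤ) (η : Option ι → Bool) :
    dotE n η = (if η none then n none else 0) +
      dotE (fun i => n (some i)) (fun i => η (some i)) := by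
  unfold dotE
  rw [univ_option, Finset.sum_insertNone]

lemma dotE_lift0 (n : Option ι → ℤ) (ε : ι → Bool) :
    dotE n (lift0 ε) = dotE (fun i => n (some i)) ε := by
  rw [dotE_opt, lift0_none, if_neg (by simp)]
  simp [lift0]

lemma dotE_lift1 (n : Option ι → ℤ) (ε : ι → Bool) :
    dotE n (lift1 ε) = n none + dotE (fun i => n (some i)) ε := by
  rw [dotE_opt, lift1_none, if_pos rfl]
  simp [lift1]

/-- half-cube points: x on the lower face and y on the upper face -/
lemma Mpoint (hmin : ∀ x : X, Dense (Set.range fun n : ℤ => (T.toEquiv ^ n) x))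
    (x y : X) :
    (fun η : Option ι → Bool => if η none then y else x) ∈ Qq T (Option ι) := by
  apply Metric.mem_closure_iff.2
  intro δ hδ
  rcases Metric.mem_closure_iff.1 (hmin x y) δ hδ with ⟨z, ⟨N, rfl⟩, hz⟩
  refine ⟨Sc T (fun o => o.elim N (fun _ => 0)) (fun _ => x), ⟨x, fun o => o.elim N (fun _ => 0), rfl⟩, ?_⟩
  rw [dist_pi_lt_iff hδ]
  intro η
  have hdot : dotE (fun o => o.elim N (fun _ => 0) : Option ι → ℤ) η =
      if η none then N else 0 := by
    rw [dotE_opt]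
    have : dotE (fun _ => (0:ℤ) : ι → ℤ) (fun i => η (some i)) = 0 := by
      unfold dotE; simp
    simp only [Option.elim]
    rw [this, add_zero]
  show dist (if η none then y else x) ((T.toEquiv ^ dotE _ η) x) < δ
  rw [hdot]
  cases hη : η none
  · simpa using hδ
  · simpa using hz

/-- lower face of an `Option ι`-cube -/
def faceL (c : Cb X (Option ι)) : Cb X ι := fun ε => c (lift0 ε)

lemma faceL_mem_Qq {c : Cb X (Option ι)} (hc : c ∈ Qq T (Option ι)) :
    faceL c ∈ Qq T ι := by
  refine Qq_transport T (F := faceL (X := X) (ι := ι)) ?_ ?_ c hc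
  · exact continuous_pi fun ε => continuous_apply (lift0 ε)
  · intro v n
    refine ⟨v, fun i => n (some i), ?_⟩
    funext ε
    show Sc T n (fun _ => v) (lift0 ε) = _
    simp only [Sc, dotE_lift0]

/-- reflection in the `none` direction preserves Q -/
def reflN (c : Cb X (Option ι)) : Cb X (Option ι) :=
  fun η => c (fun o => o.elim (!η none) (fun i => η (some i)))

lemma reflN_mem_Qq {c : Cb X (Option ι)} (hc : c ∈ Qq T (Option ι)) :
    reflN c ∈ Qq T (Option ι) := by
  refine Qq_transport T (F := reflN (X := X) (ι := ι)) ?_ ?_ c hc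
  · exact continuous_pi fun η => continuous_apply _
  · intro v n
    refine ⟨(T.toEquiv ^ n none) v, fun o => o.elim (-(n none)) (fun i => n (some i)), ?_⟩
    funext η
    show Sc T n (fun _ => v) _ = Sc T _ (fun _ => (T.toEquiv ^ n none) v) η
    simp only [Sc]
    rw [← zpow_apply_add]
    have : dotE n (fun o => o.elim (!η none) fun i => η (some i)) =
        dotE (fun o => o.elim (-(n none)) fun i => n (some i)) η + n none := by
      rw [dotE_opt, dotE_opt]
      simp only [Option.elim]
      cases hη : η none <;> simp [hη] <;> ring
    rw [this]

end optioncube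


section optioncube2

variable {ι : Type} [Fintype ι] [DecidableEq ι]

def phiD (η : Option ι → Bool) : ι → Bool := fun i => η (some i)

def emb1 (ε : ι → Bool) : Option (Option ι) → Bool :=
  fun j => j.elim false (fun o => o.elim true ε)

def emb2 (ε : ι → Bool) : Option (Option ι) → Bool :=
  fun j => j.elim true (fun o => o.elim true ε)

def phi1 (η : Option ι → Bool) : Option (Option ι) → Bool :=
  fun j => j.elim false (fun o => o.elim (η none) (fun k => η (some k)))

def phi2 (η : Option ι → Bool) : Option (Option ι) → Bool :=
  fun j => j.elim (η none) (fun o => o.elim (η none) (fun k => η (some k)))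

lemma dotE_optopt (n : Option (Option ι) → ℤ) (η : Option (Option ι) → Bool) :
    dotE n η = (if η none then n none else 0) +
      ((if η (some none) then n (some none) else 0) +
        dotE (fun k => n (some (some k))) (fun k => η (some (some k)))) := by
  rw [dotE_opt, dotE_opt]

lemma ite_add_ite' (b : Prop) [Decidable b] (a c : ℤ) :
    (if b then a else 0) + (if b then c else 0) = if b then a + c else 0 := by
  split <;> simp

lemma dotE_phiD (n : ι → ℤ) (η : Option ι → Bool) :
    dotE n (phiD η) = dotE (fun o => o.elim 0 n : Option ι → ℤ) η := by
  unfold phiD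
  rw [dotE_opt]
  simp

lemma dotE_emb1 (n : Option (Option ι) → ℤ) (ε : ι → Bool) :
    dotE n (emb1 ε) =
      dotE (fun o => o.elim 0 (fun k => n (some (some k))) : Option ι → ℤ) (lift0 ε)
        + n (some none) := by
  rw [dotE_optopt, dotE_lift0]
  simp [emb1]
  try ring

lemma dotE_emb2 (n : Option (Option ι) → ℤ) (ε : ι → Bool) :
    dotE n (emb2 ε) =
      dotE (fun o => o.elim (n none) (fun k => n (some (some k))) : Option ι → ℤ) (lift1 ε)
        + n (some none) := by
  rw [dotE_optopt, dotE_lift1]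
  simp [emb2]
  try ring

lemma dotE_phi1 (n : Option (Option ι) → ℤ) (η : Option ι → Bool) :
    dotE n (phi1 η) =
      dotE (fun o => o.elim (n (some none)) (fun k => n (some (some k))) : Option ι → ℤ) η := by
  rw [dotE_optopt, dotE_opt]
  simp [phi1]
  rfl

lemma dotE_phi2 (n : Option (Option ι) → ℤ) (η : Option ι → Bool) :
    dotE n (phi2 η) =
      dotE (fun o => o.elim (n none + n (some none)) (fun k => n (some (some k))) :
        Option ι → ℤ) η := by
  rw [dotE_optopt, dotE_opt]
  simp only [phi2, Option.elim]
  rw [← add_assoc]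
  by_cases h : η none = true <;> simp [h]

lemma phi1_eq_phi2 {η : Option ι → Bool} (h : η none = false) : phi1 η = phi2 η := by
  funext j
  cases j with
  | none => simp [phi1, phi2, h]
  | some o => rfl

lemma phi1_eq_emb1 {η : Option ι → Bool} (h : η none = true) :
    phi1 η = emb1 (fun i => η (some i)) := by
  funext j
  cases j with
  | none => rfl
  | some o => cases o with
    | none => exact h
    | some k => rfl

lemma phi2_eq_emb2 {η : Option ι → Bool} (h : η none = true) :
    phi2 η = emb2 (fun i => η (some i)) := by
  funext j
  cases j with
  | none => exact h
  | some o => cases o with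
    | none => exact h
    | some k => rfl

end optioncube2

section modulus

variable {ι : Type} [Fintype ι] [DecidableEq ι]

lemma simultaneous_modulus {κ : Type} [Fintype κ] [Nonempty κ] (k : κ → ℤ) (v : X)
    {δ : ℝ} (hδ : 0 < δ) :
    ∃ r > 0, ∀ z, dist z v < r → ∀ a, dist ((T.toEquiv ^ k a) z) ((T.toEquiv ^ k a) v) < δ := by
  have hr : ∀ a : κ, ∃ r > 0, ∀ z, dist z v < r →
      dist ((T.toEquiv ^ k a) z) ((T.toEquiv ^ k a) v) < δ := by
    intro a
    rcases Metric.continuous_iff.1 (contPow T (k a)) v δ hδ with ⟨r, hr, h⟩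
    exact ⟨r, hr, fun z hz => h z hz⟩
  choose r hrpos hrmod using hr
  refine ⟨Finset.univ.inf' Finset.univ_nonempty r, ?_, ?_⟩
  · exact (Finset.lt_inf'_iff _).2 fun a _ => hrpos a
  · intro z hz a
    refine hrmod a z (lt_of_lt_of_le hz ?_)
    exact Finset.inf'_le _ (Finset.mem_univ a)

end modulus




section Pmain

def Pprop (ι : Type) [Fintype ι] [DecidableEq ι] : Prop :=
  ∀ c ∈ Qq T ι, ∃ p ∈ Ee T ι, p (fun _ => c (fun _ => false)) = c

lemma Pprop_isEmpty (ι : Type) [Fintype ι] [DecidableEq ι] [IsEmpty ι] : Pprop T ι := by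
  intro c _
  refine ⟨id, id_mem_Ee T, ?_⟩
  funext ε
  show c (fun _ => false) = c ε
  have : ε = fun _ => false := funext fun i => isEmptyElim i
  rw [this]

lemma Pprop_equiv {ι₁ ι₂ : Type} [Fintype ι₁] [DecidableEq ι₁] [Fintype ι₂] [DecidableEq ι₂]
    (e : ι₁ ≃ ι₂) (h : Pprop T ι₁) : Pprop T ι₂ := by
  intro c hc
  have hdot : ∀ (n : ι₂ → ℤ) (ε₁ : ι₁ → Bool),
      dotE n (fun i₂ => ε₁ (e.symm i₂)) = dotE (fun i₁ => n (e i₁)) ε₁ := by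
    intro n ε₁
    unfold dotE
    exact (Fintype.sum_equiv e _ _ (fun i₁ => by simp)).symm
  have hdot' : ∀ (m : ι₁ → ℤ) (ε₂ : ι₂ → Bool),
      dotE m (fun i₁ => ε₂ (e i₁)) = dotE (fun i₂ => m (e.symm i₂)) ε₂ := by
    intro m ε₂
    unfold dotE
    exact (Fintype.sum_equiv e.symm _ _ (fun i₂ => by simp)).symm
  have hFc : (fun ε₁ => c fun i₂ => ε₁ (e.symm i₂)) ∈ Qq T ι₁ := by
    refine Qq_transport T (F := fun (c : Cb X ι₂) (ε₁ : ι₁ → Bool) =>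
      c fun i₂ => ε₁ (e.symm i₂)) ?_ ?_ c hc
    · exact continuous_pi fun ε₁ => continuous_apply _
    · intro v n
      refine ⟨v, fun i₁ => n (e i₁), ?_⟩
      funext ε₁
      show Sc T n (fun _ => v) _ = _
      simp only [Sc, hdot]
  obtain ⟨p, hpE, hpc⟩ := h _ hFc
  refine ⟨fun c₂ ε₂ => p (fun ε₁ => c₂ fun i₂ => ε₁ (e.symm i₂)) (fun i₁ => ε₂ (e i₁)), ?_, ?_⟩
  · refine Ee_transport T (G := fun (q : Cb X ι₁ → Cb X ι₁) (c₂ : Cb X ι₂) (ε₂ : ι₂ → Bool) =>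
      q (fun ε₁ => c₂ fun i₂ => ε₁ (e.symm i₂)) (fun i₁ => ε₂ (e i₁))) ?_ ?_ p hpE
    · exact continuous_pi fun c₂ => continuous_pi fun ε₂ =>
        (continuous_apply _).comp (continuous_apply _)
    · intro n
      refine ⟨fun i₂ => n (e.symm i₂), ?_⟩
      funext c₂ ε₂
      show Sc T n _ _ = Sc T _ c₂ ε₂
      simp only [Sc, hdot']
      congr 1
      exact congrArg c₂ (funext fun i₂ => by simp)
  · funext ε₂
    have h1 := congrFun hpc (fun i₁ => ε₂ (e i₁))
    exact h1.trans (congrArg c (funext fun i₂ => by simp))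


lemma Pprop_option {ι : Type} [Fintype ι] [DecidableEq ι]
    (hdistal : ∀ x y : X, x ≠ y →
      ∃ δ > 0, ∀ n : ℤ, δ ≤ dist ((T.toEquiv ^ n) x) ((T.toEquiv ^ n) y))
    (hmin : ∀ x : X, Dense (Set.range fun n : ℤ => (T.toEquiv ^ n) x))
    (h : Pprop T ι) : Pprop T (Option ι) := by
  intro c hc
  set y := c (fun _ => false) with hy
  -- straighten the lower face using the inductive hypothesis
  have hfQ : faceL c ∈ Qq T ι := faceL_mem_Qq T hc
  obtain ⟨p, hpE, hpc⟩ := h (faceL c) hfQ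
  have hfb : faceL c (fun _ => false) = y := by
    show c (lift0 fun _ => false) = y
    rw [lift0_vtx0]
  rw [hfb] at hpc
  obtain ⟨pi, hpiE, hpip, hppi⟩ := E_inv T hdistal hpE
  have hPdi : PB phiD pi ∈ Ee T (Option ι) := PB_mem T phiD _ dotE_phiD hpiE
  have hPd : PB phiD p ∈ Ee T (Option ι) := PB_mem T phiD _ dotE_phiD hpE
  have hc2Q : PB phiD pi c ∈ Qq T (Option ι) := Qq_E_inv T hPdi hc
  set c₂ := PB phiD pi c with hc2def
  -- the lower face of c₂ is constant y
  have hlow : ∀ ε : ι → Bool, c₂ (lift0 ε) = y := by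
    intro ε
    have h2 : c (lift0 ε) = cval p ε y := (congrFun hpc ε).symm
    have h1 : c₂ (lift0 ε) = cval pi ε (c (lift0 ε)) := rfl
    rw [h1, h2, ← cval_comp T hpiE hpE, hpip, cval_id]
  have hc20 : c₂ (fun _ => false) = y := by
    have h0 := hlow (fun _ => false)
    rwa [lift0_vtx0] at h0
  -- approximate c₂ by monomial cubes with exact base y
  obtain ⟨g, hg, hgt⟩ := mem_closure_iff_seq_limit.1 hc2Q
  choose v N hvN using hg
  have hcoord : ∀ η : Option ι → Bool,
      Tendsto (fun i => g i η) atTop (𝓝 (c₂ η)) := by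
    intro η
    exact ((continuous_apply η).tendsto c₂).comp hgt
  -- moduli of continuity and minimality corrections
  have hmod : ∀ i : ℕ, ∃ r > 0, ∀ z, dist z (v i) < r → ∀ η : Option ι → Bool,
      dist ((T.toEquiv ^ dotE (N i) η) z) ((T.toEquiv ^ dotE (N i) η) (v i))
        < 1/((i:ℝ)+1) := by
    intro i
    exact simultaneous_modulus T (fun η : Option ι → Bool => dotE (N i) η) (v i)
      (by positivity)
  choose r hrpos hrmod using hmod
  have hs : ∀ i : ℕ, ∃ s : ℤ, dist ((T.toEquiv ^ s) y) (v i) < r i := by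
    intro i
    rcases Metric.mem_closure_iff.1 (hmin y (v i)) (r i) (hrpos i) with ⟨z, ⟨s, rfl⟩, hz⟩
    exact ⟨s, by rwa [dist_comm]⟩
  choose s hsr using hs
  -- the corrected monomials converge to c₂
  have hA : ∀ η : Option ι → Bool,
      Tendsto (fun i => (T.toEquiv ^ (dotE (N i) η + s i)) y) atTop (𝓝 (c₂ η)) := by
    intro η
    apply tendsto_iff_dist_tendsto_zero.2
    have hb : ∀ i : ℕ, dist ((T.toEquiv ^ (dotE (N i) η + s i)) y) (c₂ η) ≤
        1/((i:ℝ)+1) + dist (g i η) (c₂ η) := by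
      intro i
      have h1 : dist ((T.toEquiv ^ (dotE (N i) η + s i)) y) (g i η) < 1/((i:ℝ)+1) := by
        rw [zpow_apply_add, hvN i]
        exact hrmod i _ (hsr i) η
      calc dist ((T.toEquiv ^ (dotE (N i) η + s i)) y) (c₂ η)
          ≤ dist ((T.toEquiv ^ (dotE (N i) η + s i)) y) (g i η) + dist (g i η) (c₂ η) :=
            dist_triangle _ _ _
        _ ≤ 1/((i:ℝ)+1) + dist (g i η) (c₂ η) := by linarith
    apply squeeze_zero (fun i => dist_nonneg) hb
    have h2 := tendsto_iff_dist_tendsto_zero.1 (hcoord η)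
    have h3 : Tendsto (fun i : ℕ => 1/((i:ℝ)+1) + dist (g i η) (c₂ η)) atTop
        (𝓝 (0 + 0)) := Tendsto.add tendsto_one_div_add_atTop_nhds_zero_nat h2
    simpa using h3
  -- the joint Ellis element over the double-option cube
  set M : ℕ → (Option (Option ι) → ℤ) := fun i =>
    fun j => j.elim (N i none) (fun o => o.elim (s i) (fun k => N i (some k))) with hM
  obtain ⟨q, hqE, hqcl⟩ : ∃ q ∈ Ee T (Option (Option ι)),
      MapClusterPt q atTop (fun i => Sc T (M i)) := by
    apply (compact_Ee T (ι := Option (Option ι))).exists_mapClusterPt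
    rw [Filter.le_principal_iff]
    exact Filter.mem_map.2 (Filter.Eventually.of_forall fun i => Sc_mem_Ee T (M i))
  have hval : ∀ (w : Option (Option ι) → Bool) (L : X),
      Tendsto (fun i => (T.toEquiv ^ dotE (M i) w) y) atTop (𝓝 L) →
      q (fun _ => y) w = L := by
    intro w L hL
    have hcont : Continuous fun f : Cb X (Option (Option ι)) → Cb X (Option (Option ι)) =>
        f (fun _ => y) w := (continuous_apply w).comp (continuous_apply _)
    have h1 := hqcl.tendsto_comp (hcont.tendsto q)
    have h3 : ClusterPt (q (fun _ => y) w) (𝓝 L) := h1.clusterPt.mono hL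
    exact eq_of_nhds_neBot h3
  -- dot computations for the M exponents
  have hMemb1 : ∀ i (ε : ι → Bool), dotE (M i) (emb1 ε) = dotE (N i) (lift0 ε) + s i := by
    intro i ε
    rw [dotE_emb1, dotE_lift0, dotE_lift0]
    simp only [hM, Option.elim]
    try ring
  have hMemb2 : ∀ i (ε : ι → Bool), dotE (M i) (emb2 ε) = dotE (N i) (lift1 ε) + s i := by
    intro i ε
    rw [dotE_emb2, dotE_lift1, dotE_lift1]
    simp only [hM, Option.elim]
    try ring
  -- values of q
  have hq1 : ∀ ε : ι → Bool, q (fun _ => y) (emb1 ε) = y := by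
    intro ε
    apply hval
    have h1 := hA (lift0 ε)
    rw [hlow ε] at h1
    have heq : (fun i => (T.toEquiv ^ dotE (M i) (emb1 ε)) y) =
        fun i => (T.toEquiv ^ (dotE (N i) (lift0 ε) + s i)) y := by
      funext i; rw [hMemb1]
    rw [heq]
    exact h1
  have hq2 : ∀ ε : ι → Bool, q (fun _ => y) (emb2 ε) = c₂ (lift1 ε) := by
    intro ε
    apply hval
    have h1 := hA (lift1 ε)
    have heq : (fun i => (T.toEquiv ^ dotE (M i) (emb2 ε)) y) =
        fun i => (T.toEquiv ^ (dotE (N i) (lift1 ε) + s i)) y := by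
      funext i; rw [hMemb2]
    rw [heq]
    exact h1
  obtain ⟨qi, hqiE, hqiq, hqqi⟩ := E_inv T hdistal hqE
  have hPB1 : PB phi1 qi ∈ Ee T (Option ι) := PB_mem T phi1 _ dotE_phi1 hqiE
  have hPB2 : PB phi2 q ∈ Ee T (Option ι) := PB_mem T phi2 _ dotE_phi2 hqE
  have hrE : (PB phi2 q) ∘ (PB phi1 qi) ∈ Ee T (Option ι) := E_comp T hPB2 hPB1
  have hrval : ((PB phi2 q) ∘ (PB phi1 qi)) (fun _ => y) = c₂ := by
    funext η
    show cval q (phi2 η) (cval qi (phi1 η) y) = c₂ η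
    cases hη : η none
    · rw [← phi1_eq_phi2 hη, ← cval_comp T hqE hqiE, hqqi, cval_id]
      rw [show η = lift0 (fun i => η (some i)) from eq_lift0 hη]
      exact (hlow _).symm
    · rw [phi1_eq_emb1 hη, phi2_eq_emb2 hη]
      have e1 : cval q (emb1 (fun i => η (some i))) y = y := hq1 _
      have e2 : cval qi (emb1 (fun i => η (some i))) y = y := by
        have h3 := cval_comp T hqiE hqE (emb1 (fun i => η (some i))) y
        rw [hqiq, cval_id, e1] at h3
        exact h3.symm
      rw [e2]
      have e3 : cval q (emb2 (fun i => η (some i))) y = c₂ (lift1 (fun i => η (some i))) :=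
        hq2 _
      rw [e3, ← eq_lift1 hη]
  refine ⟨(PB phiD p) ∘ ((PB phi2 q) ∘ (PB phi1 qi)), E_comp T hPd hrE, ?_⟩
  show PB phiD p (((PB phi2 q) ∘ (PB phi1 qi)) (fun _ => y)) = c
  rw [hrval]
  funext η
  show cval p (phiD η) (c₂ η) = c η
  have h4 : c₂ η = cval pi (phiD η) (c η) := rfl
  rw [h4, ← cval_comp T hpE hpiE, hppi, cval_id]


lemma Pprop_fin
    (hdistal : ∀ x y : X, x ≠ y →
      ∃ δ > 0, ∀ n : ℤ, δ ≤ dist ((T.toEquiv ^ n) x) ((T.toEquiv ^ n) y))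
    (hmin : ∀ x : X, Dense (Set.range fun n : ℤ => (T.toEquiv ^ n) x)) :
    ∀ k : ℕ, Pprop T (Fin k) := by
  intro k
  induction k with
  | zero => exact Pprop_isEmpty T (Fin 0)
  | succ m ih =>
      exact Pprop_equiv T (finSuccEquiv m).symm (Pprop_option T hdistal hmin ih)

lemma Pprop_main
    (hdistal : ∀ x y : X, x ≠ y →
      ∃ δ > 0, ∀ n : ℤ, δ ≤ dist ((T.toEquiv ^ n) x) ((T.toEquiv ^ n) y))
    (hmin : ∀ x : X, Dense (Set.range fun n : ℤ => (T.toEquiv ^ n) x)) (k : ℕ) :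
    Pprop T (Option (Fin k)) :=
  Pprop_option T hdistal hmin (Pprop_fin T hdistal hmin k)

lemma dotE_vtx0 {ι : Type} [Fintype ι] [DecidableEq ι] (n : ι → ℤ) :
    dotE n (fun _ => false) = 0 := by
  unfold dotE; simp

end Pmain

section relation

variable {ι : Type} [Fintype ι] [DecidableEq ι]

/-- the key relation: `(x everywhere except ∅, base y)` lies in the face orbit closure
of the diagonal at `y` -/
def Rel (d : ℕ) (x y : X) : Prop :=
  ∃ p ∈ Ee T (Option (Fin d)), ∀ η : Option (Fin d) → Bool,
    η ≠ (fun _ => false) → p (fun _ => y) η = x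

lemma Rel_refl (d : ℕ) (x : X) : Rel T d x x :=
  ⟨id, id_mem_Ee T, fun _ _ => rfl⟩

lemma Rel_symm {d : ℕ} {x y : X}
    (hdistal : ∀ x y : X, x ≠ y →
      ∃ δ > 0, ∀ n : ℤ, δ ≤ dist ((T.toEquiv ^ n) x) ((T.toEquiv ^ n) y))
    (h : Rel T d x y) : Rel T d y x := by
  obtain ⟨p, hpE, hpv⟩ := h
  obtain ⟨pi, hpiE, hpip, hppi⟩ := E_inv T hdistal hpE
  refine ⟨pi, hpiE, fun η hη => ?_⟩
  have h1 : cval p η y = x := hpv η hη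
  have h2 : cval pi η x = y := by
    rw [← h1, ← cval_comp T hpiE hpE, hpip, cval_id]
  exact h2

lemma Rel_trans {d : ℕ} {x y z : X}
    (h1 : Rel T d x y) (h2 : Rel T d y z) : Rel T d x z := by
  obtain ⟨p, hpE, hpv⟩ := h1
  obtain ⟨q, hqE, hqv⟩ := h2
  refine ⟨p ∘ q, E_comp T hpE hqE, fun η hη => ?_⟩
  show p (q (fun _ => z)) η = x
  rw [cval_apply T hpE, hqv η hη]
  exact hpv η hη

end relation

section bridges

lemma dotP_eq_dotE {d : ℕ} (m : Fin d → ℤ) (ε : Fin d → Bool) : dotP m ε = dotE m ε := rfl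

lemma Rel_RP {d : ℕ} {x y : X} (h : Rel T d x y) : (x, y) ∈ RP X T d := by
  obtain ⟨p, hpE, hpv⟩ := h
  simp only [RP, Set.mem_setOf_eq]
  intro δ hδ
  obtain ⟨n, hn⟩ := E_approx1 T hpE (fun _ => y) (half_pos hδ)
  have hco : ∀ η, dist (Sc T n (fun _ => y) η) (p (fun _ => y) η) < δ/2 :=
    fun η => lt_of_le_of_lt (dist_le_pi_dist _ _ η) hn
  refine ⟨(T.toEquiv ^ (n none)) y, y, fun i => n (some i), ?_, ?_, ?_⟩
  · have hη0 : (lift1 (fun _ => false) : Option (Fin d) → Bool) ≠ (fun _ => false) := by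
      intro hcontra
      have h0 := congrFun hcontra none
      simp [lift1] at h0
    have h1 := hco (lift1 (fun _ => false))
    rw [hpv _ hη0] at h1
    have h2 : Sc T n (fun _ => y) (lift1 (fun _ => false))
        = (T.toEquiv ^ (n none)) y := by
      show (T.toEquiv ^ dotE n (lift1 (fun _ => false))) y = _
      rw [dotE_lift1, dotE_vtx0, add_zero]
    rw [h2, dist_comm] at h1
    exact lt_of_lt_of_le h1 (by linarith)
  · simpa using hδ
  · intro ε hε
    have hl1 : (lift1 ε : Option (Fin d) → Bool) ≠ (fun _ => false) := by
      intro hcontra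
      have h0 := congrFun hcontra none
      simp [lift1] at h0
    have hl0 : (lift0 ε : Option (Fin d) → Bool) ≠ (fun _ => false) := by
      intro hcontra
      apply hε
      funext i
      have h0 := congrFun hcontra (some i)
      simpa [lift0, vertex0] using h0
    have b1 := hco (lift1 ε); rw [hpv _ hl1] at b1
    have b0 := hco (lift0 ε); rw [hpv _ hl0] at b0
    have e1 : Sc T n (fun _ => y) (lift1 ε)
        = (T.toEquiv ^ dotP (fun i => n (some i)) ε) ((T.toEquiv ^ (n none)) y) := by
      show (T.toEquiv ^ dotE n (lift1 ε)) y = _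
      rw [dotE_lift1, add_comm, zpow_apply_add, dotP_eq_dotE]
    have e0 : Sc T n (fun _ => y) (lift0 ε)
        = (T.toEquiv ^ dotP (fun i => n (some i)) ε) y := by
      show (T.toEquiv ^ dotE n (lift0 ε)) y = _
      rw [dotE_lift0, dotP_eq_dotE]
    rw [e1] at b1
    rw [e0] at b0
    have htri := dist_triangle
      ((T.toEquiv ^ dotP (fun i => n (some i)) ε) ((T.toEquiv ^ (n none)) y)) x
      ((T.toEquiv ^ dotP (fun i => n (some i)) ε) y)
    rw [dist_comm x] at htri
    linarith

end bridges

section mainbridge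

lemma tendsto_of_dist_bound {u : ℕ → X} {L : X}
    (h : ∀ i, dist (u i) L < 1/((i:ℝ)+1)) : Tendsto u atTop (𝓝 L) := by
  apply tendsto_iff_dist_tendsto_zero.2
  exact squeeze_zero (fun i => dist_nonneg) (fun i => le_of_lt (h i))
    tendsto_one_div_add_atTop_nhds_zero_nat

lemma hdotext {d : ℕ} (m : Fin d → ℤ) (η : Option (Fin d) → Bool) :
    dotE (fun o => o.elim 0 m : Option (Fin d) → ℤ) η = dotE m (fun i => η (some i)) := by
  rw [dotE_opt]
  simp

lemma RP_Rel {d : ℕ} {x y : X}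
    (hdistal : ∀ x y : X, x ≠ y →
      ∃ δ > 0, ∀ n : ℤ, δ ≤ dist ((T.toEquiv ^ n) x) ((T.toEquiv ^ n) y))
    (hmin : ∀ x : X, Dense (Set.range fun n : ℤ => (T.toEquiv ^ n) x))
    (h : (x, y) ∈ RP X T d) : Rel T d x y := by
  simp only [RP, Set.mem_setOf_eq] at h
  have hdata : ∀ i : ℕ, ∃ (x' y' : X) (m : Fin d → ℤ),
      dist x x' < 1/((i:ℝ)+1) ∧ dist y y' < 1/((i:ℝ)+1) ∧
      ∀ ε : Fin d → Bool, ε ≠ vertex0 d →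
        dist ((T.toEquiv ^ dotP m ε) x') ((T.toEquiv ^ dotP m ε) y') < 1/((i:ℝ)+1) := by
    intro i
    exact h _ (by positivity)
  choose xs ys ms hx1 hy1 hpair using hdata
  set W : ℕ → Cb X (Option (Fin d)) := fun i η => if η none then ys i else xs i with hW
  have hWQ : ∀ i, W i ∈ Qq T (Option (Fin d)) := fun i => Mpoint T hmin (xs i) (ys i)
  set ce : ℕ → Cb X (Option (Fin d)) :=
    fun i => Sc T (fun o => o.elim 0 (ms i)) (W i) with hce
  have hceQ : ∀ i, ce i ∈ Qq T (Option (Fin d)) := fun i => Qq_S_inv T (hWQ i) _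
  obtain ⟨c, φ, hφ, hconv⟩ := CompactSpace.tendsto_subseq ce
  have hcQ : c ∈ Qq T (Option (Fin d)) :=
    (isClosed_Qq T).mem_of_tendsto hconv (Filter.Eventually.of_forall fun j => hceQ (φ j))
  have hco : ∀ η : Option (Fin d) → Bool,
      Tendsto (fun j => ce (φ j) η) atTop (𝓝 (c η)) :=
    fun η => ((continuous_apply η).tendsto c).comp hconv
  -- coordinate values of the approximating cubes
  have hval0 : ∀ i, ce i (fun _ => false) = xs i := by
    intro i
    show (T.toEquiv ^ dotE (fun o => o.elim 0 (ms i)) (fun _ => false))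
      (W i (fun _ => false)) = xs i
    rw [dotE_vtx0]
    simp [hW]
  have hval1 : ∀ i, ce i (lift1 (fun _ => false)) = ys i := by
    intro i
    show (T.toEquiv ^ dotE (fun o => o.elim 0 (ms i)) (lift1 (fun _ => false)))
      (W i (lift1 (fun _ => false))) = ys i
    rw [hdotext,
      show (fun i : Fin d => lift1 (fun _ => false : Fin d → Bool) (some i))
        = (fun _ => false : Fin d → Bool) from rfl, dotE_vtx0]
    simp [hW, lift1]
  have hvall0 : ∀ i (ε : Fin d → Bool), ce i (lift0 ε) = (T.toEquiv ^ dotP (ms i) ε) (xs i) := by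
    intro i ε
    show (T.toEquiv ^ dotE (fun o => o.elim 0 (ms i)) (lift0 ε)) (W i (lift0 ε)) = _
    rw [hdotext]
    simp [hW, lift0, dotP_eq_dotE]
  have hvall1 : ∀ i (ε : Fin d → Bool), ce i (lift1 ε) = (T.toEquiv ^ dotP (ms i) ε) (ys i) := by
    intro i ε
    show (T.toEquiv ^ dotE (fun o => o.elim 0 (ms i)) (lift1 ε)) (W i (lift1 ε)) = _
    rw [hdotext]
    simp [hW, lift1, dotP_eq_dotE]
  -- limit values
  have hbound : ∀ j : ℕ, (1:ℝ)/((φ j : ℝ)+1) ≤ 1/((j:ℝ)+1) := by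
    intro j
    apply one_div_le_one_div_of_le (by positivity)
    have := hφ.le_apply (x := j)
    exact_mod_cast Nat.add_le_add_right this 1
  have hcx : c (fun _ => false) = x := by
    refine tendsto_nhds_unique (hco _) ?_
    have h1 : Tendsto (fun j => xs (φ j)) atTop (𝓝 x) := by
      apply tendsto_of_dist_bound
      intro j
      rw [dist_comm]
      exact lt_of_lt_of_le (hx1 (φ j)) (hbound j)
    have h2 : (fun j => ce (φ j) (fun _ => false)) = fun j => xs (φ j) := by
      funext j; exact hval0 (φ j)
    rw [h2]
    exact h1
  have hcy : c (lift1 (fun _ => false)) = y := by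
    refine tendsto_nhds_unique (hco _) ?_
    have h1 : Tendsto (fun j => ys (φ j)) atTop (𝓝 y) := by
      apply tendsto_of_dist_bound
      intro j
      rw [dist_comm]
      exact lt_of_lt_of_le (hy1 (φ j)) (hbound j)
    have h2 : (fun j => ce (φ j) (lift1 (fun _ => false))) = fun j => ys (φ j) := by
      funext j; exact hval1 (φ j)
    rw [h2]
    exact h1
  have hdbl : ∀ ε : Fin d → Bool, ε ≠ vertex0 d → c (lift0 ε) = c (lift1 ε) := by
    intro ε hε
    have hd1 : Tendsto (fun j => dist (ce (φ j) (lift0 ε)) (ce (φ j) (lift1 ε))) atTop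
        (𝓝 (dist (c (lift0 ε)) (c (lift1 ε)))) := (hco _).dist (hco _)
    have hd0 : Tendsto (fun j => dist (ce (φ j) (lift0 ε)) (ce (φ j) (lift1 ε))) atTop
        (𝓝 0) := by
      apply squeeze_zero (fun _ => dist_nonneg) ?_ tendsto_one_div_add_atTop_nhds_zero_nat
      intro j
      rw [hvall0, hvall1]
      exact le_of_lt (lt_of_lt_of_le (hpair (φ j) ε hε) (hbound j))
    have := tendsto_nhds_unique hd1 hd0
    exact dist_eq_zero.1 this
  -- apply the key structure theorem
  obtain ⟨Xi, hXiE, hXiv⟩ := Pprop_main T hdistal hmin d c hcQ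
  rw [hcx] at hXiv
  have hcrQ : reflN c ∈ Qq T (Option (Fin d)) := reflN_mem_Qq T hcQ
  obtain ⟨Th, hThE, hThv⟩ := Pprop_main T hdistal hmin d (reflN c) hcrQ
  have hrbase : reflN c (fun _ => false) = y := by
    show c _ = y
    have hv : (fun o : Option (Fin d) =>
        o.elim (!(fun _ => false : Option (Fin d) → Bool) none)
          (fun i => (fun _ => false : Option (Fin d) → Bool) (some i)))
        = lift1 (fun _ => false) := by
      funext o; cases o <;> rfl
    rw [hv, hcy]
  rw [hrbase] at hThv
  obtain ⟨Xii, hXiiE, hXiiXi, _⟩ := E_inv T hdistal hXiE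
  have hdotZ : ∀ (n : Option (Fin d) → ℤ) (η : Option (Fin d) → Bool),
      dotE n (lift0 (fun i => η (some i))) =
        dotE (fun o => o.elim 0 (fun i => n (some i)) : Option (Fin d) → ℤ) η := by
    intro n η
    rw [dotE_lift0, hdotext]
  have hPBXii : PB (fun η : Option (Fin d) → Bool => lift0 (fun i => η (some i))) Xii
      ∈ Ee T (Option (Fin d)) :=
    PB_mem T _ (fun n => fun o => o.elim 0 (fun i => n (some i))) hdotZ hXiiE
  refine ⟨PB (fun η : Option (Fin d) → Bool => lift0 (fun i => η (some i))) Xii ∘ Th,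
    E_comp T hPBXii hThE, ?_⟩
  intro η hη
  show PB (fun η : Option (Fin d) → Bool => lift0 (fun i => η (some i))) Xii
    (Th (fun _ => y)) η = x
  rw [hThv]
  show cval Xii (lift0 (fun i => η (some i))) (reflN c η) = x
  have hkey : ∀ ε : Fin d → Bool, cval Xii (lift0 ε) (c (lift0 ε)) = x := by
    intro ε
    have hcv : c (lift0 ε) = cval Xi (lift0 ε) x := by
      rw [← hXiv]; rfl
    rw [hcv, ← cval_comp T hXiiE hXiE, hXiiXi, cval_id]
  cases hn : η none
  · -- lower vertex: use the doubling property
    have hflip : (fun o : Option (Fin d) => o.elim (!η none) (fun i => η (some i)))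
        = lift1 (fun i => η (some i)) := by
      funext o; cases o with
      | none => simp [hn, lift1]
      | some i => rfl
    have hε' : (fun i => η (some i)) ≠ vertex0 d := by
      intro hcontra
      apply hη
      funext o
      cases o with
      | none => exact hn
      | some i => exact congrFun hcontra i
    show cval Xii (lift0 (fun i => η (some i))) (c _) = x
    rw [hflip, ← hdbl _ hε']
    exact hkey _
  · have hflip : (fun o : Option (Fin d) => o.elim (!η none) (fun i => η (some i)))
        = lift0 (fun i => η (some i)) := by
      funext o; cases o with
      | none => simp [hn, lift0]
      | some i => rfl
    show cval Xii (lift0 (fun i => η (some i))) (c _) = x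
    rw [hflip]
    exact hkey _

end mainbridge




end RPwork

/-- In a minimal distal system, `RP^[d]` is an equivalence relation. -/
theorem RP_equivalence
    {X : Type*} [MetricSpace X] [CompactSpace X] (T : X ≃ₜ X) (d : ℕ) (hd : 1 ≤ d)
    (hmin : ∀ x : X, Dense (Set.range fun n : ℤ => (T.toEquiv ^ n) x))
    (hdistal : ∀ x y : X, x ≠ y →
      ∃ δ > 0, ∀ n : ℤ, δ ≤ dist ((T.toEquiv ^ n) x) ((T.toEquiv ^ n) y)) :
    Equivalence (fun x y : X => (x, y) ∈ RP X T d) := by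
  constructor
  · intro x
    simp only [RP, Set.mem_setOf_eq]
    intro δ hδ
    exact ⟨x, x, 0, by simpa using hδ, by simpa using hδ, fun ε _ => by simpa using hδ⟩
  · intro x y hxy
    simp only [RP, Set.mem_setOf_eq] at hxy ⊢
    intro δ hδ
    obtain ⟨x', y', n, h1, h2, h3⟩ := hxy δ hδ
    exact ⟨y', x', n, h2, h1, fun ε hε => by rw [dist_comm]; exact h3 ε hε⟩
  · intro x y z hxy hyz
    exact RPwork.Rel_RP T
      (RPwork.Rel_trans T (RPwork.RP_Rel T hdistal hmin hxy)
        (RPwork.RP_Rel T hdistal hmin hyz))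
end
end

section
/- Let (X,μ,T) be an ergodic measure-preserving system, d ≥ 1, and let μ^[d] be the cubic measure on X^{2^d} whose two-dimensional marginals are all μ × μ. Let f_ε ∈ L^∞(μ) for nonempty ε ⊆ [d] and let F ∈ L^2(μ) satisfy ∫ g·F dμ = ∫ g(x_∅) ∏_{ε≠∅} f_ε(x_ε) dμ^[d] for all g ∈ L^∞(μ). Then ‖F‖_{L^∞(μ)} ≤ ∏_{ε≠∅} ‖f_ε‖_{L^{2^d−1}(μ)}. -/
open Filter Topology MeasureTheory
open scoped ENNReal NNReal

noncomputable section

/-- Bound on the `L^∞` norm of the limit of cubic averages: if `F` is dual to the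
product `∏_{ε ≠ ∅} f_ε(x_ε)` with respect to the cubic measure `μ^[d]`, then
`‖F‖_∞ ≤ ∏_{ε ≠ ∅} ‖f_ε‖_{2^d − 1}`. -/
theorem dual_function_Linfty_bound
    {X : Type*} [MeasurableSpace X] (μ : Measure X) [IsProbabilityMeasure μ]
    (T : X → X) (hT : MeasurePreserving T μ μ) (herg : Ergodic T μ)
    (d : ℕ) (hd : 1 ≤ d)
    (μd : Measure ((Fin d → Bool) → X)) [IsProbabilityMeasure μd]
    (hmarg2 : ∀ ε θ : Fin d → Bool, ε ≠ θ →
      Measure.map (fun y : (Fin d → Bool) → X => (y ε, y θ)) μd = μ.prod μ)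
    (f : (Fin d → Bool) → X → ℝ) (hf : ∀ ε, MemLp (f ε) ⊤ μ)
    (F : X → ℝ) (hF : MemLp F 2 μ)
    (hdual : ∀ g : X → ℝ, MemLp g ⊤ μ →
      ∫ x, g x * F x ∂μ =
        ∫ y, g (y (vertex0 d)) *
          ∏ ε ∈ Finset.univ.filter (· ≠ vertex0 d), f ε (y ε) ∂μd) :
    eLpNorm F ⊤ μ ≤
      ∏ ε ∈ Finset.univ.filter (· ≠ vertex0 d),
        eLpNorm (f ε) ((2 ^ d - 1 : ℕ)) μ := by
  classical
  set s : Finset (Fin d → Bool) := Finset.univ.filter (· ≠ vertex0 d) with hs_def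
  set m : ℕ := 2 ^ d - 1 with hm_def
  have h2d : 2 ≤ 2 ^ d := by
    calc 2 = 2 ^ 1 := by norm_num
    _ ≤ 2 ^ d := Nat.pow_le_pow_right (by norm_num) hd
  have hm1 : 1 ≤ m := by omega
  have hm0 : (m : ℝ) ≠ 0 := Nat.cast_ne_zero.2 (by omega)
  have hcard : s.card = m := by
    rw [hs_def, Finset.filter_ne', Finset.card_erase_of_mem (Finset.mem_univ _),
      Finset.card_univ]
    simp [hm_def]
  -- one-dimensional marginals
  have hproj : ∀ ε : Fin d → Bool, Measure.map (fun y => y ε) μd = μ := by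
    intro ε
    obtain ⟨θ, hθ⟩ : ∃ θ, ε ≠ θ := ⟨fun i => !(ε i), by
      intro h
      have := congrFun h ⟨0, hd⟩
      simp at this⟩
    calc Measure.map (fun y => y ε) μd
        = Measure.map (Prod.fst ∘ fun y : (Fin d → Bool) → X => (y ε, y θ)) μd := rfl
      _ = Measure.map Prod.fst (Measure.map (fun y : (Fin d → Bool) → X => (y ε, y θ)) μd) :=
          (Measure.map_map measurable_fst
            ((measurable_pi_apply ε).prodMk (measurable_pi_apply θ))).symm
      _ = Measure.map Prod.fst (μ.prod μ) := by rw [hmarg2 ε θ hθ]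
      _ = μ := by rw [Measure.map_fst_prod]; simp
  -- ENNReal-valued norms
  set H : (Fin d → Bool) → X → ℝ≥0∞ := fun ε x => (‖f ε x‖₊ : ℝ≥0∞) with hH_def
  have hHmeas : ∀ ε, AEMeasurable (H ε) μ := fun ε => (hf ε).1.enorm
  -- the generic product identity used twice
  have hprodid : ∀ (a : ℝ≥0∞) (h : (Fin d → Bool) → ℝ≥0∞),
      ∏ ε ∈ s, (a * h ε ^ (m : ℕ)) ^ (1 / (m : ℝ)) = a * ∏ ε ∈ s, h ε := by
    intro a h
    calc ∏ ε ∈ s, (a * h ε ^ (m : ℕ)) ^ (1 / (m : ℝ))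
        = ∏ ε ∈ s, (a ^ (1 / (m : ℝ)) * h ε) := by
          refine Finset.prod_congr rfl fun ε _ => ?_
          rw [ENNReal.mul_rpow_of_nonneg _ _ (by positivity), ← ENNReal.rpow_natCast (h ε),
            ← ENNReal.rpow_mul, mul_one_div, div_self hm0, ENNReal.rpow_one]
      _ = (a ^ (1 / (m : ℝ))) ^ (s.card : ℕ) * ∏ ε ∈ s, h ε := by
          rw [Finset.prod_mul_distrib, Finset.prod_const]
      _ = a * ∏ ε ∈ s, h ε := by
          rw [← ENNReal.rpow_natCast, ← ENNReal.rpow_mul, hcard, one_div,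
            inv_mul_cancel₀ hm0, ENNReal.rpow_one]
  -- the key duality bound
  have key : ∀ g : X → ℝ, MemLp g ⊤ μ →
      (‖∫ x, g x * F x ∂μ‖₊ : ℝ≥0∞) ≤
        (∫⁻ x, (‖g x‖₊ : ℝ≥0∞) ∂μ) * ∏ ε ∈ s, eLpNorm (f ε) m μ := by
    intro g hg
    set G : X → ℝ≥0∞ := fun x => (‖g x‖₊ : ℝ≥0∞) with hG_def
    have hGmeas : AEMeasurable G μ := hg.1.enorm
    -- AEMeasurable compositions with projections
    have hcompG : AEMeasurable (fun y : (Fin d → Bool) → X => G (y (vertex0 d))) μd := by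
      have h1 : AEMeasurable G (Measure.map (fun y : (Fin d → Bool) → X => y (vertex0 d)) μd) := by
        rw [hproj]; exact hGmeas
      exact h1.comp_aemeasurable (measurable_pi_apply _).aemeasurable
    have hcompH : ∀ ε, AEMeasurable (fun y : (Fin d → Bool) → X => H ε (y ε)) μd := by
      intro ε
      have h1 : AEMeasurable (H ε) (Measure.map (fun y : (Fin d → Bool) → X => y ε) μd) := by
        rw [hproj]; exact hHmeas ε
      exact h1.comp_aemeasurable (measurable_pi_apply _).aemeasurable
    rw [hdual g hg]
    calc (‖∫ y, g (y (vertex0 d)) * ∏ ε ∈ s, f ε (y ε) ∂μd‖₊ : ℝ≥0∞)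
        ≤ ∫⁻ y, (‖g (y (vertex0 d)) * ∏ ε ∈ s, f ε (y ε)‖₊ : ℝ≥0∞) ∂μd :=
          enorm_integral_le_lintegral_enorm _
      _ = ∫⁻ y, G (y (vertex0 d)) * ∏ ε ∈ s, H ε (y ε) ∂μd := by
          refine lintegral_congr fun y => ?_
          simp [hG_def, hH_def, nnnorm_mul, nnnorm_prod, ENNReal.coe_mul, ENNReal.coe_finset_prod]
      _ = ∫⁻ y, ∏ ε ∈ s, (G (y (vertex0 d)) * H ε (y ε) ^ (m : ℕ)) ^ (1 / (m : ℝ)) ∂μd := by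
          refine lintegral_congr fun y => ?_
          rw [hprodid]
      _ ≤ ∏ ε ∈ s, (∫⁻ y, G (y (vertex0 d)) * H ε (y ε) ^ (m : ℕ) ∂μd) ^ (1 / (m : ℝ)) := by
          refine ENNReal.lintegral_prod_norm_pow_le s (fun ε _ => ?_) ?_ (fun ε _ => by positivity)
          · exact hcompG.mul ((hcompH ε).pow_const _)
          · rw [Finset.sum_const, hcard, nsmul_eq_mul, mul_one_div, div_self hm0]
      _ = ∏ ε ∈ s, ((∫⁻ x, G x ∂μ) * ∫⁻ x, H ε x ^ (m : ℕ) ∂μ) ^ (1 / (m : ℝ)) := by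
          refine Finset.prod_congr rfl fun ε hε => ?_
          congr 1
          have hεv : vertex0 d ≠ ε := by
            rw [hs_def] at hε
            exact (Finset.mem_filter.1 hε).2.symm
          have hpair : Measurable (fun y : (Fin d → Bool) → X => (y (vertex0 d), y ε)) :=
            (measurable_pi_apply _).prodMk (measurable_pi_apply _)
          have hfun : AEMeasurable (fun z : X × X => G z.1 * H ε z.2 ^ (m : ℕ)) (μ.prod μ) :=
            hGmeas.comp_fst.mul ((hHmeas ε).comp_snd.pow_const _)
          calc ∫⁻ y, G (y (vertex0 d)) * H ε (y ε) ^ (m : ℕ) ∂μd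
              = ∫⁻ z : X × X, G z.1 * H ε z.2 ^ (m : ℕ)
                  ∂(Measure.map (fun y : (Fin d → Bool) → X => (y (vertex0 d), y ε)) μd) := by
                rw [lintegral_map' ?_ hpair.aemeasurable]
                rw [hmarg2 _ _ hεv]; exact hfun
            _ = ∫⁻ z : X × X, G z.1 * H ε z.2 ^ (m : ℕ) ∂(μ.prod μ) := by
                rw [hmarg2 _ _ hεv]
            _ = (∫⁻ x, G x ∂μ) * ∫⁻ x, H ε x ^ (m : ℕ) ∂μ :=
                lintegral_prod_mul hGmeas ((hHmeas ε).pow_const _)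
      _ = (∫⁻ x, G x ∂μ) * ∏ ε ∈ s, eLpNorm (f ε) m μ := by
          have : ∀ ε ∈ s, eLpNorm (f ε) m μ = (∫⁻ x, H ε x ^ (m : ℕ) ∂μ) ^ (1 / (m : ℝ)) := by
            intro ε _
            rw [eLpNorm_eq_lintegral_rpow_enorm_toReal
              (by exact_mod_cast Nat.cast_ne_zero.2 (Nat.one_le_iff_ne_zero.1 hm1)) (by simp)]
            simp only [ENNReal.toReal_natCast]
            congr 1
            exact lintegral_congr fun x => by rw [← ENNReal.rpow_natCast]; rfl
          calc ∏ ε ∈ s, ((∫⁻ x, G x ∂μ) * ∫⁻ x, H ε x ^ (m : ℕ) ∂μ) ^ (1 / (m : ℝ))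
              = ∏ ε ∈ s, ((∫⁻ x, G x ∂μ) *
                  ((∫⁻ x, H ε x ^ (m : ℕ) ∂μ) ^ (1 / (m : ℝ))) ^ (m : ℕ)) ^ (1 / (m : ℝ)) := by
                refine Finset.prod_congr rfl fun ε _ => ?_
                rw [← ENNReal.rpow_natCast (_ ^ (1 / (m : ℝ))), ← ENNReal.rpow_mul,
                  one_div, inv_mul_cancel₀ hm0, ENNReal.rpow_one]
            _ = (∫⁻ x, G x ∂μ) * ∏ ε ∈ s, (∫⁻ x, H ε x ^ (m : ℕ) ∂μ) ^ (1 / (m : ℝ)) :=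
                hprodid _ _
            _ = (∫⁻ x, G x ∂μ) * ∏ ε ∈ s, eLpNorm (f ε) m μ := by
                rw [Finset.prod_congr rfl this]
  -- now the duality argument
  set C : ℝ≥0∞ := ∏ ε ∈ s, eLpNorm (f ε) m μ with hC_def
  rcases eq_or_ne C ⊤ with hCtop | hCtop
  · rw [hCtop]; exact le_top
  have hFint : Integrable F μ := hF.integrable (by norm_num)
  obtain ⟨F', hF'sm, hFF'⟩ := hF.1
  have hF'int : Integrable F' μ := hFint.congr hFF'
  -- a one-sided smallness claim, applied to F' and -F'
  have claim : ∀ (G₀ : X → ℝ) (σ : ℝ), (∀ᵐ x ∂μ, G₀ x = σ * F x) → StronglyMeasurable G₀ →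
      σ = 1 ∨ σ = -1 → ∀ t : ℝ, C.toReal < t → μ {x | t < G₀ x} = 0 := by
    intro G₀ σ hG₀ hG₀sm hσ t ht
    have ht0 : 0 < t := lt_of_le_of_lt ENNReal.toReal_nonneg ht
    set A := {x | t < G₀ x} with hA_def
    have hA : MeasurableSet A := measurableSet_lt measurable_const hG₀sm.measurable
    by_contra hne
    set g : X → ℝ := A.indicator (fun _ => σ) with hg_def
    have hgsm : AEStronglyMeasurable g μ :=
      (stronglyMeasurable_const.indicator hA).aestronglyMeasurable
    have hgmem : MemLp g ⊤ μ := by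
      refine memLp_top_of_bound hgsm 1 (.of_forall fun x => ?_)
      rw [hg_def]
      rcases hσ with h | h <;>
        · simp only [Set.indicator_apply]
          split <;> simp [h]
    -- the integral ∫ g F is bounded below
    have hginteq : ∫ x, g x * F x ∂μ = ∫ x in A, G₀ x ∂μ := by
      have h1 : ∀ᵐ x ∂μ, g x * F x = A.indicator (fun y => σ * F y) x := by
        filter_upwards with x
        rw [hg_def]
        simp only [Set.indicator_apply]
        split <;> simp
      rw [integral_congr_ae h1, integral_indicator hA]
      exact setIntegral_congr_ae hA (by filter_upwards [hG₀] with x hx _ using hx.symm)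
    have hμAfin : μ A ≠ ⊤ := (measure_lt_top μ A).ne
    have hlow : t * (μ A).toReal ≤ ∫ x in A, G₀ x ∂μ := by
      rw [mul_comm, ← smul_eq_mul]
      refine setIntegral_ge_of_const_le (c := t) (f := G₀) hA hμAfin (fun x hx => le_of_lt hx) ?_
      have : Integrable G₀ μ := by
        rcases hσ with h | h <;>
          · refine (hFint.const_mul σ).congr ?_
            filter_upwards [hG₀] with x hx using hx.symm
      exact this.integrableOn
    -- the integral of ‖g‖ is μ A
    have hgnorm : ∫⁻ x, (‖g x‖₊ : ℝ≥0∞) ∂μ = μ A := by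
      have : (fun x => (‖g x‖₊ : ℝ≥0∞)) = A.indicator (fun _ => 1) := by
        ext x
        rw [hg_def]
        simp only [Set.indicator_apply]
        split <;> rcases hσ with h | h <;> simp [h]
      rw [this, lintegral_indicator hA]
      simp
    -- combine
    have hup : ENNReal.ofReal (t * (μ A).toReal) ≤ μ A * C := by
      calc ENNReal.ofReal (t * (μ A).toReal)
          ≤ ENNReal.ofReal (∫ x, g x * F x ∂μ) := by
            rw [hginteq]; exact ENNReal.ofReal_le_ofReal hlow
        _ ≤ (‖∫ x, g x * F x ∂μ‖₊ : ℝ≥0∞) := by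
            rw [← enorm_eq_nnnorm, Real.enorm_eq_ofReal_abs]
            exact ENNReal.ofReal_le_ofReal (le_abs_self _)
        _ ≤ (∫⁻ x, (‖g x‖₊ : ℝ≥0∞) ∂μ) * C := key g hgmem
        _ = μ A * C := by rw [hgnorm]
    have hofReal : ENNReal.ofReal (t * (μ A).toReal) = ENNReal.ofReal t * μ A := by
      rw [ENNReal.ofReal_mul ht0.le, ENNReal.ofReal_toReal hμAfin]
    rw [hofReal, mul_comm (μ A) C] at hup
    have : ENNReal.ofReal t ≤ C := by
      exact (ENNReal.mul_le_mul_iff_left hne hμAfin).1 hup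
    have : t ≤ C.toReal := (ENNReal.ofReal_le_iff_le_toReal hCtop).1 this
    linarith
  have hae1 : ∀ᵐ x ∂μ, F' x = (1 : ℝ) * F x := by
    filter_upwards [hFF'] with x hx
    rw [← hx]; ring
  have hae2' : ∀ᵐ x ∂μ, -F' x = (-1 : ℝ) * F x := by
    filter_upwards [hFF'] with x hx
    rw [← hx]; ring
  have claim1 : ∀ t : ℝ, C.toReal < t → μ {x | t < F' x} = 0 := fun t ht =>
    claim F' 1 hae1 hF'sm (Or.inl rfl) t ht
  have claim2 : ∀ t : ℝ, C.toReal < t → μ {x | t < -F' x} = 0 := fun t ht =>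
    claim (fun x => -F' x) (-1) hae2' hF'sm.neg (Or.inr rfl) t ht
  -- a.e. bound
  have haebound : ∀ᵐ x ∂μ, |F' x| ≤ C.toReal := by
    have hnull : μ {x | C.toReal < |F' x|} = 0 := by
      have hsub : {x | C.toReal < |F' x|} ⊆
          ⋃ n : ℕ, ({x | C.toReal + 1 / (n + 1) < F' x} ∪
            {x | C.toReal + 1 / (n + 1) < -F' x}) := by
        intro x hx
        have hx2 : C.toReal < |F' x| := hx
        obtain ⟨n, hn⟩ := exists_nat_one_div_lt (sub_pos.2 hx2)
        have hx' : C.toReal + 1 / (n + 1) < |F' x| := by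
          push_cast at hn ⊢
          linarith
        rcases lt_abs.1 hx' with h | h
        · exact Set.mem_iUnion.2 ⟨n, Or.inl h⟩
        · exact Set.mem_iUnion.2 ⟨n, Or.inr h⟩
      refine measure_mono_null hsub (measure_iUnion_null fun n => measure_union_null ?_ ?_)
      all_goals
        have hpos : (0 : ℝ) < 1 / (n + 1) := by positivity
      · exact claim1 _ (by linarith)
      · exact claim2 _ (by linarith)
    rw [ae_iff]
    convert hnull using 2
    ext x
    simp [not_le]
  -- conclude
  rw [eLpNorm_exponent_top]
  have hae2 : ∀ᵐ x ∂μ, ‖F x‖ ≤ C.toReal := by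
    filter_upwards [haebound, hFF'] with x h1 h2
    rw [Real.norm_eq_abs, h2]
    exact h1
  calc eLpNormEssSup F μ ≤ ENNReal.ofReal C.toReal := eLpNormEssSup_le_of_ae_bound hae2
    _ = C := ENNReal.ofReal_toReal hCtop
end
end

section
/- Let (X,μ,T) be an ergodic measure-preserving system, d ≥ 1, and A ⊆ X measurable. Let D_d 1_A denote the dual function of order d of 1_A, i.e. the L^2-limit of the averages N^{-d} Σ_{0 ≤ n₁,…,n_d < N} ∏_{∅≠ε⊆[d]} 1_A(T^{n·ε}x). Then D_d 1_A (x) > 0 for μ-almost every x ∈ A. -/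
open Filter Topology MeasureTheory

noncomputable section

/-- The dual function `D_d 1_A` is positive almost everywhere on `A`.
Here `D` denotes the dual-function operator on indicator functions and `s` the
`d`-th Gowers–Host–Kra seminorm, assumed to satisfy the standard facts:
`∫ 1_B · D 1_B dμ = s(1_B)^{2^d}`, `|∫ 1_B dμ| ≤ s(1_B)`, and monotonicity
`B ⊆ C → 0 ≤ D 1_B ≤ D 1_C`. -/
theorem dual_function_pos_ae
    {X : Type*} [MeasurableSpace X] (μ : Measure X) [IsProbabilityMeasure μ]
    (T : X → X) (hT : MeasurePreserving T μ μ) (herg : Ergodic T μ)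
    (d : ℕ) (hd : 1 ≤ d)
    (D : Set X → X → ℝ) (s : Set X → ℝ)
    (hDmeas : ∀ B : Set X, Measurable (D B))
    (hii : ∀ B : Set X, MeasurableSet B →
      ∫ x, B.indicator (fun _ => (1 : ℝ)) x * D B x ∂μ = (s B) ^ (2 ^ d))
    (hiii : ∀ B : Set X, MeasurableSet B → |∫ x, B.indicator (fun _ => (1 : ℝ)) x ∂μ| ≤ s B)
    (hiv : ∀ B C : Set X, B ⊆ C → ∀ x, 0 ≤ D B x ∧ D B x ≤ D C x)
    (A : Set X) (hA : MeasurableSet A) :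
    ∀ᵐ x ∂μ, x ∈ A → 0 < D A x := by

  set B : Set X := A ∩ {x | D A x ≤ 0} with hBdef
  have hBmeas : MeasurableSet B := hA.inter (measurableSet_le (hDmeas A) measurable_const)
  have hBA : B ⊆ A := Set.inter_subset_left
  -- integrand vanishes everywhere
  have hzero : ∀ x, B.indicator (fun _ => (1 : ℝ)) x * D B x = 0 := by
    intro x
    by_cases hx : x ∈ B
    · have h1 := (hiv B A hBA x).1
      have h2 := (hiv B A hBA x).2
      have h3 : D A x ≤ 0 := hx.2
      have : D B x = 0 := le_antisymm (h2.trans h3) h1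
      simp [this]
    · simp [Set.indicator_of_notMem hx]
  have hint : ∫ x, B.indicator (fun _ => (1 : ℝ)) x * D B x ∂μ = 0 := by
    simp only [hzero, integral_zero]
  have hsB : s B = 0 := by
    have := (hii B hBmeas).symm.trans hint
    exact pow_eq_zero_iff (by positivity) |>.mp this
  have hμB : μ B = 0 := by
    have h := hiii B hBmeas
    rw [hsB] at h
    have hint1 : ∫ x, B.indicator (fun _ => (1 : ℝ)) x ∂μ = (μ B).toReal := by
      rw [integral_indicator_const (1 : ℝ) hBmeas]; simp [Measure.real]
    rw [hint1] at h
    have : (μ B).toReal = 0 := le_antisymm (le_of_abs_le h) ENNReal.toReal_nonneg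
    exact (ENNReal.toReal_eq_zero_iff _).mp this |>.resolve_right (measure_ne_top μ B)
  have hae : ∀ᵐ x ∂μ, x ∉ B := by
    rw [ae_iff]; simpa using hμB
  filter_upwards [hae] with x hx hxA
  have h0 : 0 ≤ D A x := (hiv A A Set.Subset.rfl x).1
  rcases h0.lt_or_eq with h | h
  · exact h
  · exact absurd ⟨hxA, by simp [← h]⟩ hx
end
end

section
/- Let (X,T) be a minimal topological dynamical system on a compact metric space and μ an invariant ergodic Borel probability measure on X. Then for every d ≥ 1, the cubic measure μ^[d] on X^{2^d} is concentrated on the set Q^[d](X) of dynamical parallelepipeds, i.e. μ^[d](Q^[d](X)) = 1. -/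
open Filter Topology MeasureTheory

noncomputable section

/-- The Host–Kra cubic measure `μ^[d]` of a minimal system with ergodic invariant
measure `μ` is concentrated on the set `Q^[d](X)` of dynamical parallelepipeds. -/
theorem cubic_measure_concentrated_on_cubeQ
    {X : Type*} [MetricSpace X] [CompactSpace X] [MeasurableSpace X] [BorelSpace X]
    (T : X ≃ₜ X)
    (hmin : ∀ x : X, Dense (Set.range fun n : ℤ => (T.toEquiv ^ n) x))
    (μ : Measure X) [IsProbabilityMeasure μ]
    (hT : MeasurePreserving T μ μ) (herg : Ergodic T μ)
    (d : ℕ) (hd : 1 ≤ d)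
    (μd : Measure ((Fin d → Bool) → X)) [IsProbabilityMeasure μd]
    (hchar : ∀ f : (Fin d → Bool) → C(X, ℝ),
      Tendsto (fun N : ℕ => (1 / (N : ℝ) ^ d) * ∑ n : Fin d → Fin N,
          ∫ x, ∏ ε : Fin d → Bool,
            f ε ((T.toEquiv ^ dotP (fun i => ((n i : ℕ) : ℤ)) ε) x) ∂μ)
        atTop (nhds (∫ y, ∏ ε : Fin d → Bool, f ε (y ε) ∂μd))) :
    μd (cubeQ X T d) = 1 := by
  have hclosed : IsClosed (cubeQ X T d) := isClosed_closure
  -- It suffices to show the complement is null.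
  have hcompl : μd (cubeQ X T d)ᶜ = 0 := by
    apply measure_null_of_locally_null
    intro z hz
    -- Find a basic open box around `z` disjoint from `cubeQ`.
    obtain ⟨I, u, hu, hbox⟩ :=
      (isOpen_pi_iff.mp hclosed.isOpen_compl) z hz
    -- Extend `u` to all indices.
    set u' : (Fin d → Bool) → Set X := fun ε => if ε ∈ I then u ε else Set.univ with hu'
    have hu'open : ∀ ε, IsOpen (u' ε) := by
      intro ε
      by_cases h : ε ∈ I
      · simp only [hu', if_pos h]; exact (hu ε h).1
      · simp only [hu', if_neg h]; exact isOpen_univ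
    have hzu' : ∀ ε, z ε ∈ u' ε := by
      intro ε
      by_cases h : ε ∈ I
      · simp only [hu', if_pos h]; exact (hu ε h).2
      · simp only [hu', if_neg h]; exact Set.mem_univ _
    -- Urysohn functions.
    have hf : ∀ ε : Fin d → Bool, ∃ f : C(X, ℝ),
        Set.EqOn f 0 (u' ε)ᶜ ∧ Set.EqOn f 1 {z ε} ∧ ∀ x, f x ∈ Set.Icc (0:ℝ) 1 := by
      intro ε
      refine exists_continuous_zero_one_of_isCompact
        ((hu'open ε).isClosed_compl.isCompact) isClosed_singleton ?_
      simp only [Set.disjoint_singleton_right, Set.mem_compl_iff, not_not]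
      exact hzu' ε
    choose f hf0 hf1 hf01 using hf
    -- The product function.
    set g : ((Fin d → Bool) → X) → ℝ := fun y => ∏ ε : Fin d → Bool, f ε (y ε) with hg
    have hgcont : Continuous g := by
      apply continuous_finset_prod
      intro ε _
      exact (f ε).continuous.comp (continuous_apply ε)
    have hgnonneg : ∀ y, 0 ≤ g y := fun y =>
      Finset.prod_nonneg fun ε _ => (hf01 ε (y ε)).1
    -- The product vanishes on points of the orbit-cube form.
    have hvanish : ∀ (x : X) (n : Fin d → ℤ),
        (∏ ε : Fin d → Bool, f ε ((T.toEquiv ^ dotP n ε) x)) = 0 := by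
      intro x n
      set y : (Fin d → Bool) → X := fun ε => (T.toEquiv ^ dotP n ε) x with hy
      have hyQ : y ∈ cubeQ X T d := subset_closure ⟨x, n, rfl⟩
      have hynot : y ∉ (I : Set (Fin d → Bool)).pi u := by
        intro h
        exact (hbox h) hyQ
      simp only [Set.mem_pi, not_forall] at hynot
      obtain ⟨ε, hεI, hyε⟩ := hynot
      refine Finset.prod_eq_zero (Finset.mem_univ ε) ?_
      have : y ε ∈ (u' ε)ᶜ := by
        simp [hu', Finset.mem_coe.mp hεI, hyε]
      exact hf0 ε this
    -- Hence the characteristic limit is zero.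
    have hzero : Tendsto (fun N : ℕ => (1 / (N : ℝ) ^ d) * ∑ n : Fin d → Fin N,
        ∫ x, ∏ ε : Fin d → Bool,
          f ε ((T.toEquiv ^ dotP (fun i => ((n i : ℕ) : ℤ)) ε) x) ∂μ)
        atTop (nhds 0) := by
      have : ∀ N : ℕ, (1 / (N : ℝ) ^ d) * ∑ n : Fin d → Fin N,
          ∫ x, ∏ ε : Fin d → Bool,
            f ε ((T.toEquiv ^ dotP (fun i => ((n i : ℕ) : ℤ)) ε) x) ∂μ = 0 := by
        intro N
        have : ∀ n : Fin d → Fin N, (∫ x, ∏ ε : Fin d → Bool,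
            f ε ((T.toEquiv ^ dotP (fun i => ((n i : ℕ) : ℤ)) ε) x) ∂μ) = 0 := by
          intro n
          have : (fun x => ∏ ε : Fin d → Bool,
              f ε ((T.toEquiv ^ dotP (fun i => ((n i : ℕ) : ℤ)) ε) x)) = fun _ => (0:ℝ) := by
            funext x
            exact hvanish x _
          rw [this, integral_zero]
        simp [this]
      simp only [this]
      exact tendsto_const_nhds
    have hint : (∫ y, ∏ ε : Fin d → Bool, f ε (y ε) ∂μd) = 0 :=
      tendsto_nhds_unique (hchar f) hzero
    -- So `g` is a.e. zero.
    have hgint : Integrable g μd :=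
      hgcont.integrable_of_hasCompactSupport (HasCompactSupport.of_compactSpace g)
    have hae : g =ᵐ[μd] 0 := by
      rw [← integral_eq_zero_iff_of_nonneg hgnonneg hgint]
      exact hint
    have hnull : μd {y | g y ≠ 0} = 0 := by
      have := hae
      rw [Filter.EventuallyEq, ae_iff] at this
      simpa using this
    -- The open set where `g > 0` is a null neighborhood of `z`.
    refine ⟨g ⁻¹' Set.Ioi 0, ?_, ?_⟩
    · apply mem_nhdsWithin_of_mem_nhds
      apply (hgcont.isOpen_preimage _ isOpen_Ioi).mem_nhds
      have : g z = 1 := by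
        simp only [hg]
        refine Finset.prod_eq_one fun ε _ => ?_
        exact hf1 ε rfl
      simp [Set.mem_preimage, this]
    · refine measure_mono_null ?_ hnull
      intro y hy
      simp only [Set.mem_preimage, Set.mem_Ioi] at hy
      exact fun h => by simp [h] at hy
  have hmeas : MeasurableSet (cubeQ X T d) := hclosed.measurableSet
  have := measure_add_measure_compl (μ := μd) hmeas
  rw [hcompl, add_zero] at this
  simpa using this
end
end

section
/- Let (X,T) be a minimal system of order d−1 (i.e., any two points of Q^[d](X) agreeing in 2^d − 1 coordinates are equal) and μ an invariant ergodic measure on X. Then for every η > 0 there exists δ > 0 such that for every x ∈ X, the dual function D_d 1_{B(x,δ)} vanishes μ-almost everywhere on the complement of B(x,η). -/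
open Filter Topology MeasureTheory

noncomputable section

/-- In a minimal system of order `d−1` with ergodic invariant measure `μ`, for every
`η > 0` there is `δ > 0` such that for every `x` the dual function `D_d 1_{B(x,δ)}`
vanishes `μ`-a.e. off `B(x,η)`. Here `D B` denotes the dual function of order `d`
of the indicator of `B`, assumed nonnegative, measurable, and satisfying the duality
identity with the cubic measure `μ^[d]`, which is concentrated on `Q^[d](X)`. -/
theorem dual_function_vanishes_off_ball
    {X : Type*} [MetricSpace X] [CompactSpace X] [MeasurableSpace X] [BorelSpace X]
    (T : X ≃ₜ X)
    (hmin : ∀ x : X, Dense (Set.range fun n : ℤ => (T.toEquiv ^ n) x))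
    (μ : Measure X) [IsProbabilityMeasure μ]
    (hT : MeasurePreserving T μ μ) (herg : Ergodic T μ)
    (d : ℕ) (hd : 1 ≤ d)
    (horder : ∀ u ∈ cubeQ X T d, ∀ v ∈ cubeQ X T d,
      (∃ ε₀ : Fin d → Bool, ∀ ε : Fin d → Bool, ε ≠ ε₀ → u ε = v ε) → u = v)
    (μd : Measure ((Fin d → Bool) → X)) [IsProbabilityMeasure μd]
    (hQd : μd (cubeQ X T d) = 1)
    (D : Set X → X → ℝ)
    (hDmeas : ∀ B : Set X, Measurable (D B))
    (hDpos : ∀ (B : Set X) (x : X), 0 ≤ D B x)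
    (hdual : ∀ B : Set X, MeasurableSet B → ∀ g : X → ℝ, Measurable g →
      (∃ C : ℝ, ∀ x, |g x| ≤ C) →
      ∫ x, g x * D B x ∂μ =
        ∫ y, g (y (vertex0 d)) *
          ∏ ε ∈ Finset.univ.filter (· ≠ vertex0 d),
            B.indicator (fun _ => (1 : ℝ)) (y ε) ∂μd) :
    ∀ η > (0 : ℝ), ∃ δ > (0 : ℝ), ∀ x : X,
      ∀ᵐ z ∂μ, z ∉ Metric.ball x η → D (Metric.ball x δ) z = 0 := by
  -- Constant cubes belong to cubeQ
  have hconst : ∀ x : X, (fun _ : Fin d → Bool => x) ∈ cubeQ X T d := by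
    intro x
    apply subset_closure
    refine ⟨x, 0, ?_⟩
    funext ε
    have : dotP (0 : Fin d → ℤ) ε = 0 := by simp [dotP]
    simp [this]
  -- Key geometric claim via compactness
  have hclaim : ∀ η > (0 : ℝ), ∃ δ > (0 : ℝ), ∀ x : X, ∀ y ∈ cubeQ X T d,
      (∀ ε : Fin d → Bool, ε ≠ vertex0 d → dist (y ε) x < δ) →
      dist (y (vertex0 d)) x < η := by
    intro η hη
    by_contra hcon
    push_neg at hcon
    have hsel : ∀ n : ℕ, ∃ p : X × ((Fin d → Bool) → X),
        p.2 ∈ cubeQ X T d ∧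
        (∀ ε : Fin d → Bool, ε ≠ vertex0 d → dist (p.2 ε) p.1 < 1 / (n + 1)) ∧
        η ≤ dist (p.2 (vertex0 d)) p.1 := by
      intro n
      obtain ⟨x, y, hyQ, hclose, hfar⟩ := hcon (1 / (n + 1))
        (by positivity)
      exact ⟨(x, y), hyQ, hclose, hfar⟩
    choose p hpQ hpclose hpfar using hsel
    obtain ⟨a, -, φ, hφ, hlim⟩ :=
      isCompact_univ.tendsto_subseq (x := p) (fun n => Set.mem_univ _)
    have hx : Tendsto (fun n => (p (φ n)).1) atTop (𝓝 a.1) :=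
      (continuous_fst.tendsto a).comp hlim
    have hy : Tendsto (fun n => (p (φ n)).2) atTop (𝓝 a.2) :=
      (continuous_snd.tendsto a).comp hlim
    have hyε : ∀ ε : Fin d → Bool,
        Tendsto (fun n => (p (φ n)).2 ε) atTop (𝓝 (a.2 ε)) := by
      intro ε
      exact (tendsto_pi_nhds.mp hy) ε
    -- a.2 ∈ cubeQ
    have haQ : a.2 ∈ cubeQ X T d :=
      isClosed_closure.mem_of_tendsto hy (Eventually.of_forall fun n => hpQ (φ n))
    -- a.2 ε = a.1 for ε ≠ vertex0
    have heq : ∀ ε : Fin d → Bool, ε ≠ vertex0 d → a.2 ε = a.1 := by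
      intro ε hε
      have hdist : Tendsto (fun n => dist ((p (φ n)).2 ε) ((p (φ n)).1)) atTop
          (𝓝 (dist (a.2 ε) a.1)) := (hyε ε).dist hx
      have hsq : Tendsto (fun n => dist ((p (φ n)).2 ε) ((p (φ n)).1)) atTop
          (𝓝 0) := by
        apply squeeze_zero (fun n => dist_nonneg)
          (g := fun n => 1 / ((φ n : ℝ) + 1))
        · intro n
          exact le_of_lt (hpclose (φ n) ε hε)
        · have h1 : Tendsto (fun n : ℕ => 1 / ((n : ℝ) + 1)) atTop (𝓝 0) :=
            tendsto_one_div_add_atTop_nhds_zero_nat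
          exact h1.comp hφ.tendsto_atTop
      have := tendsto_nhds_unique hdist hsq
      exact dist_eq_zero.mp this
    -- dist (a.2 v0) a.1 ≥ η
    have hfar : η ≤ dist (a.2 (vertex0 d)) a.1 := by
      have hdist : Tendsto (fun n => dist ((p (φ n)).2 (vertex0 d)) ((p (φ n)).1))
          atTop (𝓝 (dist (a.2 (vertex0 d)) a.1)) := (hyε _).dist hx
      exact ge_of_tendsto' hdist (fun n => hpfar (φ n))
    -- apply horder
    have : (fun _ : Fin d → Bool => a.1) = a.2 := by
      apply horder _ (hconst a.1) _ haQ
      exact ⟨vertex0 d, fun ε hε => (heq ε hε).symm⟩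
    have h0 : dist (a.2 (vertex0 d)) a.1 = 0 := by
      rw [← this]; simp
    rw [h0] at hfar
    linarith
  intro η hη
  obtain ⟨δ, hδ, hkey⟩ := hclaim η hη
  refine ⟨δ, hδ, fun x => ?_⟩
  set B := Metric.ball x δ with hB
  set E := (Metric.ball x η)ᶜ with hE
  set g : X → ℝ := fun z => E.indicator (fun z => (1 + D B z)⁻¹) z with hg
  have hone : ∀ z, (0:ℝ) < 1 + D B z := fun z => by
    have := hDpos B z; linarith
  have hgmeas : Measurable g :=
    ((measurable_const.add (hDmeas B)).inv).indicator
      measurableSet_ball.compl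
  have hgbound : ∀ z, |g z| ≤ 1 := by
    intro z
    simp only [hg]
    by_cases hz : z ∈ E
    · rw [Set.indicator_of_mem hz, abs_of_nonneg (le_of_lt (inv_pos.mpr (hone z)))]
      rw [inv_le_one_iff₀]
      right
      have := hDpos B z; linarith
    · rw [Set.indicator_of_notMem hz]; simp
  have hident := hdual B measurableSet_ball g hgmeas ⟨1, hgbound⟩
  -- RHS is zero
  have hQmeas : MeasurableSet (cubeQ X T d) := isClosed_closure.measurableSet
  have haeQ : ∀ᵐ y ∂μd, y ∈ cubeQ X T d := by
    rw [ae_iff]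
    have : μd (cubeQ X T d)ᶜ = 0 := by
      rw [measure_compl hQmeas (measure_ne_top _ _), hQd]
      simp
    exact this
  have hRHS : ∫ y, g (y (vertex0 d)) *
      ∏ ε ∈ Finset.univ.filter (· ≠ vertex0 d),
        B.indicator (fun _ => (1 : ℝ)) (y ε) ∂μd = 0 := by
    apply integral_eq_zero_of_ae
    filter_upwards [haeQ] with y hyQ
    by_cases hall : ∀ ε : Fin d → Bool, ε ≠ vertex0 d → dist (y ε) x < δ
    · have hin : y (vertex0 d) ∈ Metric.ball x η := by
        rw [Metric.mem_ball]
        exact hkey x y hyQ hall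
      have : g (y (vertex0 d)) = 0 := by
        simp only [hg]
        exact Set.indicator_of_notMem (by simpa [hE] using hin) _
      simp [this]
    · push_neg at hall
      obtain ⟨ε₀, hε₀, hfar⟩ := hall
      have hmem : ε₀ ∈ Finset.univ.filter (· ≠ vertex0 d) := by
        simp [hε₀]
      have : B.indicator (fun _ => (1:ℝ)) (y ε₀) = 0 := by
        apply Set.indicator_of_notMem
        rw [hB, Metric.mem_ball]
        exact not_lt.mpr hfar
      rw [Finset.prod_eq_zero hmem this, mul_zero]
      rfl
  rw [hRHS] at hident
  -- Conclude f = g * D B = 0 a.e.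
  set f : X → ℝ := fun z => g z * D B z with hf
  have hfnonneg : ∀ z, 0 ≤ f z := by
    intro z
    apply mul_nonneg _ (hDpos B z)
    simp only [hg]
    exact Set.indicator_nonneg (fun z _ => le_of_lt (inv_pos.mpr (hone z))) z
  have hfmeas : Measurable f := hgmeas.mul (hDmeas B)
  have hfbound : ∀ z, ‖f z‖ ≤ 1 := by
    intro z
    rw [Real.norm_eq_abs, abs_of_nonneg (hfnonneg z)]
    simp only [hf]
    by_cases hz : z ∈ E
    · have hgz : g z = (1 + D B z)⁻¹ := by simp only [hg]; exact Set.indicator_of_mem hz _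
      rw [hgz]
      have h1 := hone z
      have h2 := hDpos B z
      have h3 : (1 + D B z)⁻¹ * (1 + D B z) = 1 := inv_mul_cancel₀ (ne_of_gt h1)
      nlinarith [inv_pos.mpr h1]
    · have hgz : g z = 0 := by simp only [hg]; exact Set.indicator_of_notMem hz _
      simp [hgz]
  have hfint : Integrable f μ := by
    refine ⟨hfmeas.aestronglyMeasurable, ?_⟩
    exact HasFiniteIntegral.of_bounded (C := 1) (ae_of_all _ hfbound)
  have hfzero : f =ᵐ[μ] 0 :=
    (integral_eq_zero_iff_of_nonneg (fun z => hfnonneg z) hfint).mp hident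
  filter_upwards [hfzero] with z hz hzball
  have hzE : z ∈ E := hzball
  have hgz : g z = (1 + D B z)⁻¹ := by simp only [hg]; exact Set.indicator_of_mem hzE _
  have : g z * D B z = 0 := hz
  rw [hgz] at this
  have hne : (1 + D B z)⁻¹ ≠ 0 := ne_of_gt (inv_pos.mpr (hone z))
  exact (mul_eq_zero.mp this).resolve_left hne
end
end
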